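/- arXiv:1209.3493 — 7 statements merged into one kernel-verified Lean document; each statement's English description precedes it below -/
import Mathlib

section
/- For every interior lattice point (a,b,c) of the dilated triangle (i.e., (a,b,c) in V(3,n) with a,b,c > 0), the hexagon vector H_{a,b,c} = e_{a-1,b,c+1} - e_{a,b-1,c+1} + e_{a+1,b-1,c} - e_{a+1,b,c-1} + e_{a,b+1,c-1} - e_{a-1,b+1,c} is an eigenvector of the adjacency matrix of SR(3,n) with eigenvalue -3. -/
open Finset

abbrev SRVert (d n : ℕ) : Type := {x : Fin d → ℕ // ∑ i, x i = n}

noncomputable instance SRVert.fintype (d n : ℕ) : Fintype (SRVert d n) :=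
  Fintype.ofInjective
    (fun x : SRVert d n => fun i => (⟨x.1 i, by
      have h := Finset.single_le_sum (f := x.1)
        (fun j _ => Nat.zero_le (x.1 j)) (Finset.mem_univ i)
      have h2 := x.2
      omega⟩ : Fin (n+1)))
    (fun x y h => Subtype.ext (funext fun i => congrArg Fin.val (congrFun h i)))

/-- The simplicial rook graph: two vertices are adjacent if they differ in
exactly two coordinates. -/
def SR (d n : ℕ) : SimpleGraph (SRVert d n) where
  Adj x y := (Finset.univ.filter fun i => x.1 i ≠ y.1 i).card = 2
  symm := by
    constructor
    intro x y h
    rw [show (Finset.univ.filter fun i => y.1 i ≠ x.1 i)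
        = (Finset.univ.filter fun i => x.1 i ≠ y.1 i) by
      apply Finset.filter_congr; intro i _; simp [ne_comm]]
    exact h
  loopless := by constructor; intro z h; simp at h

instance (d n : ℕ) : DecidableRel (SR d n).Adj :=
  fun x y => inferInstanceAs (Decidable (_ = 2))


/-- Characteristic vector of the lattice line `{v : v₀ = i}` in `ℝ^{V(3,n)}`. -/
def Xv (n i : ℕ) : SRVert 3 n → ℝ := fun v => if v.1 0 = i then 1 else 0

/-- Characteristic vector of the lattice line `{v : v₁ = j}`. -/
def Yv (n j : ℕ) : SRVert 3 n → ℝ := fun v => if v.1 1 = j then 1 else 0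

/-- Characteristic vector of the lattice line `{v : v₂ = k}`. -/
def Zv (n k : ℕ) : SRVert 3 n → ℝ := fun v => if v.1 2 = k then 1 else 0

/-- The all-ones vector. -/
def Jv (n : ℕ) : SRVert 3 n → ℝ := fun _ => 1

/-- Standard basis vector `e_v`. -/
def ev {d n : ℕ} (v : SRVert d n) : SRVert d n → ℝ := fun w => if w = v then 1 else 0


/-- The hexagon vector `H_{a,b,c}` (signed characteristic vector of the lattice
hexagon centered at `(a,b,c)`). -/
def hexv (n a b c : ℕ) : SRVert 3 n → ℝ := fun v =>
  (if v.1 = ![a-1, b, c+1] then 1 else 0) - (if v.1 = ![a, b-1, c+1] then 1 else 0)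
  + (if v.1 = ![a+1, b-1, c] then 1 else 0) - (if v.1 = ![a+1, b, c-1] then 1 else 0)
  + (if v.1 = ![a, b+1, c-1] then 1 else 0) - (if v.1 = ![a-1, b+1, c] then 1 else 0)



lemma tripleeq (f : Fin 3 → ℕ) (x y z : ℕ) :
    f = ![x, y, z] ↔ f 0 = x ∧ f 1 = y ∧ f 2 = z := by
  constructor
  · rintro rfl; simp
  · rintro ⟨h0, h1, h2⟩; funext i; fin_cases i <;> simpa

lemma adj_iff (n : ℕ) (x y : SRVert 3 n) :
    (SR 3 n).Adj x y ↔
      ((x.1 0 ≠ y.1 0 ∧ x.1 1 ≠ y.1 1 ∧ x.1 2 = y.1 2) ∨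
       (x.1 0 ≠ y.1 0 ∧ x.1 1 = y.1 1 ∧ x.1 2 ≠ y.1 2) ∨
       (x.1 0 = y.1 0 ∧ x.1 1 ≠ y.1 1 ∧ x.1 2 ≠ y.1 2)) := by
  show (Finset.univ.filter fun i => x.1 i ≠ y.1 i).card = 2 ↔ _
  rw [Finset.card_filter, Fin.sum_univ_three]
  split_ifs <;> simp_all

def mkV (n x y z : ℕ) (h : x + y + z = n) : SRVert 3 n :=
  ⟨![x, y, z], by simpa [Fin.sum_univ_three] using h⟩

lemma adj_ind (n : ℕ) (w : SRVert 3 n) (x y z : ℕ) (h : x + y + z = n) :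
    (if (SR 3 n).Adj w (mkV n x y z h) then (1:ℝ) else 0)
    = (if w.1 0 = x then 1 else 0) + (if w.1 1 = y then 1 else 0)
      + (if w.1 2 = z then 1 else 0) - 3 * (if w.1 = ![x, y, z] then 1 else 0) := by
  have hw := w.2
  rw [Fin.sum_univ_three] at hw
  simp only [adj_iff, tripleeq]
  simp only [mkV, Matrix.cons_val_zero, Matrix.cons_val_one, Matrix.head_cons,
    Matrix.cons_val_two, Matrix.tail_cons, true_and, and_true, if_true]
  split_ifs
  all_goals try (exfalso; omega)
  all_goals norm_num

/-- each hexagon vector is an eigenvector of the adjacency matrix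
of `SR(3,n)` with eigenvalue `-3`. -/
theorem hex_eigenvector (n a b c : ℕ) (ha : 0 < a) (hb : 0 < b) (hc : 0 < c)
    (habc : a + b + c = n) :
    hexv n a b c ≠ 0 ∧
    ((SR 3 n).adjMatrix ℝ).mulVec (hexv n a b c) = (-3 : ℝ) • hexv n a b c := by
  have hmem : ∀ (x y z : ℕ) (h : x + y + z = n) (u : SRVert 3 n),
      (u.1 = ![x, y, z]) = (u = mkV n x y z h) := by
    intro x y z h u
    exact propext ⟨fun hh => Subtype.ext hh, fun hh => by rw [hh]; rfl⟩
  constructor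
  · intro h0
    have e1 : hexv n a b c (mkV n (a-1) b (c+1) (by omega)) = 1 := by
      simp only [hexv, mkV, tripleeq, Matrix.cons_val_zero, Matrix.cons_val_one,
        Matrix.head_cons, Matrix.cons_val_two, Matrix.tail_cons, true_and, and_true, if_true]
      split_ifs
      all_goals try (exfalso; omega)
      all_goals norm_num
    rw [h0] at e1
    norm_num at e1
  · funext w
    rw [SimpleGraph.adjMatrix_mulVec_apply]
    have key : ∀ (x y z : ℕ) (h : x + y + z = n),
        (∑ u ∈ (SR 3 n).neighborFinset w, (if u.1 = ![x, y, z] then (1:ℝ) else 0))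
        = (if w.1 0 = x then 1 else 0) + (if w.1 1 = y then 1 else 0)
          + (if w.1 2 = z then 1 else 0) - 3 * (if w.1 = ![x, y, z] then 1 else 0) := by
      intro x y z h
      rw [← adj_ind n w x y z h]
      simp_rw [hmem x y z h]
      rw [Finset.sum_ite_eq' ((SR 3 n).neighborFinset w) (mkV n x y z h) (fun _ => (1:ℝ))]
      simp [SimpleGraph.mem_neighborFinset]
    simp only [hexv, Finset.sum_add_distrib, Finset.sum_sub_distrib]
    rw [key (a-1) b (c+1) (by omega), key a (b-1) (c+1) (by omega),
      key (a+1) (b-1) c (by omega), key (a+1) b (c-1) (by omega),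
      key a (b+1) (c-1) (by omega), key (a-1) (b+1) c (by omega)]
    rw [Pi.smul_apply, smul_eq_mul]
    simp only [hexv]
    ring
end

section
/- The hexagon vectors {H_{a,b,c} : (a,b,c) in V(3,n), a,b,c > 0} are linearly independent in R^{V(3,n)}. -/
open Finset

noncomputable instance hexIdxFintype (n : ℕ) :
    Fintype {p : ℕ × ℕ × ℕ //
      p.1 + p.2.1 + p.2.2 = n ∧ 0 < p.1 ∧ 0 < p.2.1 ∧ 0 < p.2.2} :=
  Fintype.ofInjective
    (fun p => ((⟨p.1.1, by have := p.2.1; omega⟩ : Fin (n+1)),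
               (⟨p.1.2.1, by have := p.2.1; omega⟩ : Fin (n+1)),
               (⟨p.1.2.2, by have := p.2.1; omega⟩ : Fin (n+1))))
    (by
      rintro ⟨⟨a, b, c⟩, hx⟩ ⟨⟨d, e, f⟩, hy⟩ h
      simp only [Prod.mk.injEq, Fin.mk.injEq] at h
      apply Subtype.ext
      simp only [Prod.mk.injEq]
      exact ⟨h.1, h.2.1, h.2.2⟩)

lemma vec3_eq {x y z x' y' z' : ℕ} :
    (![x, y, z] = ![x', y', z']) ↔ (x = x' ∧ y = y' ∧ z = z') := by
  constructor
  · intro h; exact ⟨congrFun h 0, congrFun h 1, congrFun h 2⟩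
  · rintro ⟨rfl, rfl, rfl⟩; rfl

def hexCoef (n : ℕ)
    (g : {p : ℕ × ℕ × ℕ //
      p.1 + p.2.1 + p.2.2 = n ∧ 0 < p.1 ∧ 0 < p.2.1 ∧ 0 < p.2.2} → ℝ)
    (t : ℕ × ℕ × ℕ) : ℝ :=
  if h : t.1 + t.2.1 + t.2.2 = n ∧ 0 < t.1 ∧ 0 < t.2.1 ∧ 0 < t.2.2 then g ⟨t, h⟩
  else 0

lemma hexPick (n : ℕ)
    (g : {p : ℕ × ℕ × ℕ //
      p.1 + p.2.1 + p.2.2 = n ∧ 0 < p.1 ∧ 0 < p.2.1 ∧ 0 < p.2.2} → ℝ)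
    (t : ℕ × ℕ × ℕ) :
    (∑ p : {p : ℕ × ℕ × ℕ //
      p.1 + p.2.1 + p.2.2 = n ∧ 0 < p.1 ∧ 0 < p.2.1 ∧ 0 < p.2.2},
        if p.1 = t then g p else 0) = hexCoef n g t := by
  by_cases h : t.1 + t.2.1 + t.2.2 = n ∧ 0 < t.1 ∧ 0 < t.2.1 ∧ 0 < t.2.2
  · rw [hexCoef, dif_pos h, Finset.sum_eq_single (⟨t, h⟩ : _)]
    · simp
    · intro p _ hne
      rw [if_neg]; intro he; exact hne (Subtype.ext he)
    · intro habs; exact absurd (Finset.mem_univ _) habs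
  · rw [hexCoef, dif_neg h, Finset.sum_eq_zero]
    intro p _
    rw [if_neg]; intro he; exact h (he ▸ p.2)

lemma hexKey (n : ℕ)
    (g : {p : ℕ × ℕ × ℕ //
      p.1 + p.2.1 + p.2.2 = n ∧ 0 < p.1 ∧ 0 < p.2.1 ∧ 0 < p.2.2} → ℝ)
    (hg : ∑ p, g p • hexv n p.1.1 p.1.2.1 p.1.2.2 = 0)
    (i j k : ℕ) (hijk : i + j + k = n) :
    hexCoef n g (i+1, j, k-1) - hexCoef n g (i, j+1, k-1)
      + hexCoef n g (i-1, j+1, k) - hexCoef n g (i-1, j, k+1)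
      + hexCoef n g (i, j-1, k+1) - hexCoef n g (i+1, j-1, k) = 0 := by
  set v : SRVert 3 n :=
    ⟨![i, j, k], by simp [Fin.sum_univ_three]; omega⟩ with hv
  have h0 := congrFun hg v
  simp only [Finset.sum_apply, Pi.smul_apply, smul_eq_mul, Pi.zero_apply] at h0
  have hterm : ∀ p ∈ (Finset.univ : Finset {p : ℕ × ℕ × ℕ //
      p.1 + p.2.1 + p.2.2 = n ∧ 0 < p.1 ∧ 0 < p.2.1 ∧ 0 < p.2.2}),
      g p * hexv n p.1.1 p.1.2.1 p.1.2.2 v =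
      (if p.1 = ((i+1, j, k-1) : ℕ × ℕ × ℕ) then g p else 0)
      - (if p.1 = ((i, j+1, k-1) : ℕ × ℕ × ℕ) then g p else 0)
      + (if p.1 = ((i-1, j+1, k) : ℕ × ℕ × ℕ) then g p else 0)
      - (if p.1 = ((i-1, j, k+1) : ℕ × ℕ × ℕ) then g p else 0)
      + (if p.1 = ((i, j-1, k+1) : ℕ × ℕ × ℕ) then g p else 0)
      - (if p.1 = ((i+1, j-1, k) : ℕ × ℕ × ℕ) then g p else 0) := by
    rintro ⟨⟨a, b, c⟩, hp⟩ -
    have hsum : a + b + c = n := hp.1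
    have ha : 0 < a := hp.2.1
    have hb : 0 < b := hp.2.2.1
    have hc : 0 < c := hp.2.2.2
    simp only [hexv, hv]
    rw [if_congr (show (![i,j,k] = ![a-1, b, c+1]) ↔
          (((a,b,c) : ℕ×ℕ×ℕ) = (i+1, j, k-1)) by
        simp only [vec3_eq, Prod.mk.injEq]; omega) rfl rfl,
      if_congr (show (![i,j,k] = ![a, b-1, c+1]) ↔
          (((a,b,c) : ℕ×ℕ×ℕ) = (i, j+1, k-1)) by
        simp only [vec3_eq, Prod.mk.injEq]; omega) rfl rfl,
      if_congr (show (![i,j,k] = ![a+1, b-1, c]) ↔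
          (((a,b,c) : ℕ×ℕ×ℕ) = (i-1, j+1, k)) by
        simp only [vec3_eq, Prod.mk.injEq]; omega) rfl rfl,
      if_congr (show (![i,j,k] = ![a+1, b, c-1]) ↔
          (((a,b,c) : ℕ×ℕ×ℕ) = (i-1, j, k+1)) by
        simp only [vec3_eq, Prod.mk.injEq]; omega) rfl rfl,
      if_congr (show (![i,j,k] = ![a, b+1, c-1]) ↔
          (((a,b,c) : ℕ×ℕ×ℕ) = (i, j-1, k+1)) by
        simp only [vec3_eq, Prod.mk.injEq]; omega) rfl rfl,
      if_congr (show (![i,j,k] = ![a-1, b+1, c]) ↔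
          (((a,b,c) : ℕ×ℕ×ℕ) = (i+1, j-1, k)) by
        simp only [vec3_eq, Prod.mk.injEq]; omega) rfl rfl]
    simp only [mul_sub, mul_add, mul_ite, mul_one, mul_zero]
  rw [Finset.sum_congr rfl hterm, Finset.sum_sub_distrib, Finset.sum_add_distrib,
    Finset.sum_sub_distrib, Finset.sum_add_distrib, Finset.sum_sub_distrib,
    hexPick, hexPick, hexPick, hexPick, hexPick, hexPick] at h0
  exact h0

/-- the hexagon vectors are linearly independent. -/
theorem hex_linearIndependent (n : ℕ) :
    LinearIndependent ℝ
      (fun p : {p : ℕ × ℕ × ℕ //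
          p.1 + p.2.1 + p.2.2 = n ∧ 0 < p.1 ∧ 0 < p.2.1 ∧ 0 < p.2.2} =>
        hexv n p.1.1 p.1.2.1 p.1.2.2) := by
  rw [Fintype.linearIndependent_iff]
  intro g hg p
  have main : ∀ a b c : ℕ, hexCoef n g (a, b, c) = 0 := by
    intro a
    induction a using Nat.strong_induction_on with
    | _ a iha =>
      intro b
      induction b using Nat.strong_induction_on with
      | _ b ihb =>
        intro c
        rcases Nat.eq_zero_or_pos a with ha | ha
        · subst ha; simp [hexCoef]
        rcases Nat.eq_zero_or_pos b with hb | hb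
        · subst hb; simp [hexCoef]
        by_cases hs : a + b + c = n
        · have hk := hexKey n g hg (a-1) b (c+1) (by omega)
          have e1 : hexCoef n g (a-1-1, b+1, c+1) = 0 := iha (a-1-1) (by omega) (b+1) (c+1)
          have e2 : hexCoef n g (a-1-1, b, c+1+1) = 0 := iha (a-1-1) (by omega) b (c+1+1)
          have e3 : hexCoef n g (a-1, b+1, c+1-1) = 0 := iha (a-1) (by omega) (b+1) (c+1-1)
          have e4 : hexCoef n g (a-1, b-1, c+1+1) = 0 := iha (a-1) (by omega) (b-1) (c+1+1)
          have e5 : hexCoef n g (a-1+1, b-1, c+1) = 0 := by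
            rcases Nat.eq_zero_or_pos (b-1) with hb1 | hb1
            · rw [hb1]; simp [hexCoef]
            · have := ihb (b-1) (by omega) (c+1)
              rwa [show a-1+1 = a by omega]
          rw [show a-1+1 = a by omega, show c+1-1 = c by omega] at hk
          rw [show a-1+1 = a by omega] at e5
          rw [show c+1-1 = c by omega] at e3
          linarith
        · simp [hexCoef, hs]
  have : g p = hexCoef n g p.1 := by
    rw [hexCoef, dif_pos p.2]
  rw [this, main p.1.1 p.1.2.1 p.1.2.2]
end

section
/- The span of the lattice-line vectors {X_i, Y_i, Z_i : 0 <= i <= n} in R^{V(3,n)} has dimension exactly 3n, and the 3n vectors {X_i, Y_i, Z_i : 0 <= i <= n-1} form a basis of this span. -/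
open Finset

-- coordinate sum
lemma coordSum (n : ℕ) (v : SRVert 3 n) : v.1 0 + v.1 1 + v.1 2 = n := by
  have := v.2
  rwa [Fin.sum_univ_three] at this

lemma coordLe0 (n : ℕ) (v : SRVert 3 n) : v.1 0 ≤ n := by
  have := coordSum n v; omega
lemma coordLe1 (n : ℕ) (v : SRVert 3 n) : v.1 1 ≤ n := by
  have := coordSum n v; omega
lemma coordLe2 (n : ℕ) (v : SRVert 3 n) : v.1 2 ≤ n := by
  have := coordSum n v; omega

-- vertex constructor
def vert (n i j k : ℕ) (h : i + j + k = n) : SRVert 3 n :=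
  ⟨![i, j, k], by simp [Fin.sum_univ_three]; omega⟩

lemma sum_fin_ind (n m : ℕ) (c : Fin n → ℝ) :
    ∑ i : Fin n, (if m = (i : ℕ) then c i else 0)
      = if h : m < n then c ⟨m, h⟩ else 0 := by
  split_ifs with h
  · rw [Finset.sum_eq_single (⟨m, h⟩ : Fin n)]
    · simp
    · intro i _ hi
      have : m ≠ (i : ℕ) := fun he => hi (Fin.ext he.symm)
      simp [this]
    · simp
  · apply Finset.sum_eq_zero
    intro i _
    have : m ≠ (i : ℕ) := by have := i.isLt; omega
    simp [this]

lemma eval_combo (n : ℕ) (g : Fin n × Fin 3 → ℝ) (v : SRVert 3 n) :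
    (∑ p : Fin n × Fin 3, g p • ![Xv n p.1, Yv n p.1, Zv n p.1] p.2) v
    = (if h : v.1 0 < n then g (⟨v.1 0, h⟩, 0) else 0)
    + (if h : v.1 1 < n then g (⟨v.1 1, h⟩, 1) else 0)
    + (if h : v.1 2 < n then g (⟨v.1 2, h⟩, 2) else 0) := by
  have h1 : (∑ p : Fin n × Fin 3, g p • ![Xv n p.1, Yv n p.1, Zv n p.1] p.2) v
      = ∑ p : Fin n × Fin 3, g p * (![Xv n p.1, Yv n p.1, Zv n p.1] p.2 v) := by
    rw [Finset.sum_apply]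
    simp
  rw [h1, Fintype.sum_prod_type_right, Fin.sum_univ_three]
  congr 1
  · congr 1
    · rw [← sum_fin_ind n (v.1 0) (fun i => g (i, 0))]
      apply Finset.sum_congr rfl
      intro i _
      simp [Xv, mul_ite]
    · rw [← sum_fin_ind n (v.1 1) (fun i => g (i, 1))]
      apply Finset.sum_congr rfl
      intro i _
      simp [Yv, mul_ite]
  · rw [← sum_fin_ind n (v.1 2) (fun i => g (i, 2))]
    apply Finset.sum_congr rfl
    intro i _
    simp [Zv, mul_ite]

lemma key_zero (n : ℕ) (hn : 1 ≤ n) (F G H : ℕ → ℝ)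
    (hF : ∀ m, n ≤ m → F m = 0) (hG : ∀ m, n ≤ m → G m = 0) (hH : ∀ m, n ≤ m → H m = 0)
    (h : ∀ i j k, i + j + k = n → F i + G j + H k = 0) :
    ∀ m, F m = 0 ∧ G m = 0 ∧ H m = 0 := by
  have hFn : F n = 0 := hF n le_rfl
  have hGn : G n = 0 := hG n le_rfl
  have hHn : H n = 0 := hH n le_rfl
  have e1 := h n 0 0 (by omega)
  have e2 := h 0 n 0 (by omega)
  have e3 := h 0 0 n (by omega)
  have hF0 : F 0 = 0 := by linarith
  have hG0 : G 0 = 0 := by linarith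
  have hH0 : H 0 = 0 := by linarith
  have hEqFG : ∀ i ≤ n, F i = G i := by
    intro i hi
    have h2 := h i 0 (n - i) (by omega)
    have h4 := h 0 i (n - i) (by omega)
    linarith
  have hEqFH : ∀ i ≤ n, F i = H i := by
    intro i hi
    have h1 := h i (n - i) 0 (by omega)
    have h3 := h 0 (n - i) i (by omega)
    linarith
  have hNeg : ∀ c ≤ n, F (n - c) = -F c := by
    intro c hc
    have h1 := h c (n - c) 0 (by omega)
    have := hEqFG (n - c) (by omega)
    linarith
  have hAdd : ∀ a b, a + b ≤ n → F (a + b) = F a + F b := by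
    intro a b hab
    have h1 := h a b (n - a - b) (by omega)
    have hg := hEqFG b (by omega)
    have hh := hEqFH (n - a - b) (by omega)
    have hneg := hNeg (a + b) hab
    have : n - (a + b) = n - a - b := by omega
    rw [this] at hneg
    linarith
  have hLin : ∀ i ≤ n, F i = i * F 1 := by
    intro i
    induction i with
    | zero => intro; simp [hF0]
    | succ i ih =>
      intro hi
      have := hAdd i 1 (by omega)
      have h2 := ih (by omega)
      push_cast
      linarith
  have hF1 : F 1 = 0 := by
    have := hLin n le_rfl
    have hn' : (n : ℝ) ≠ 0 := by positivity
    rw [hFn] at this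
    exact (mul_eq_zero.1 this.symm).resolve_left hn'
  have hFall : ∀ m, F m = 0 := by
    intro m
    by_cases hm : m ≤ n
    · rw [hLin m hm, hF1, mul_zero]
    · exact hF m (by omega)
  intro m
  refine ⟨hFall m, ?_, ?_⟩
  · by_cases hm : m ≤ n
    · rw [← hEqFG m hm]; exact hFall m
    · exact hG m (by omega)
  · by_cases hm : m ≤ n
    · rw [← hEqFH m hm]; exact hFall m
    · exact hH m (by omega)

def lineFam (n : ℕ) : Fin n × Fin 3 → (SRVert 3 n → ℝ) :=
  fun p => ![Xv n p.1, Yv n p.1, Zv n p.1] p.2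

lemma lineFam0 (n : ℕ) (i : Fin n) : lineFam n (i, 0) = Xv n i := rfl
lemma lineFam1 (n : ℕ) (i : Fin n) : lineFam n (i, 1) = Yv n i := rfl
lemma lineFam2 (n : ℕ) (i : Fin n) : lineFam n (i, 2) = Zv n i := rfl

lemma eval_combo' (n : ℕ) (g : Fin n × Fin 3 → ℝ) (v : SRVert 3 n) :
    (∑ p : Fin n × Fin 3, g p • lineFam n p) v
    = (if h : v.1 0 < n then g (⟨v.1 0, h⟩, 0) else 0)
    + (if h : v.1 1 < n then g (⟨v.1 1, h⟩, 1) else 0)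
    + (if h : v.1 2 < n then g (⟨v.1 2, h⟩, 2) else 0) :=
  eval_combo n g v

lemma li_lineFam (n : ℕ) (hn : 1 ≤ n) : LinearIndependent ℝ (lineFam n) := by
  rw [Fintype.linearIndependent_iff]
  intro g hg
  set F : ℕ → ℝ := fun m => if h : m < n then g (⟨m, h⟩, 0) else 0 with hFdef
  set G : ℕ → ℝ := fun m => if h : m < n then g (⟨m, h⟩, 1) else 0 with hGdef
  set H : ℕ → ℝ := fun m => if h : m < n then g (⟨m, h⟩, 2) else 0 with hHdef
  have hkey := key_zero n hn F G H
    (fun m hm => by simp [hFdef, Nat.not_lt.2 hm])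
    (fun m hm => by simp [hGdef, Nat.not_lt.2 hm])
    (fun m hm => by simp [hHdef, Nat.not_lt.2 hm])
    (by
      intro i j k hijk
      have h2 := congrFun hg (vert n i j k hijk)
      rw [Pi.zero_apply] at h2
      rw [eval_combo' n g (vert n i j k hijk)] at h2
      exact h2)
  rintro ⟨i, c⟩
  fin_cases c
  · have := (hkey (i : ℕ)).1
    rw [hFdef] at this
    simpa [i.isLt] using this
  · have := (hkey (i : ℕ)).2.1
    rw [hGdef] at this
    simpa [i.isLt] using this
  · have := (hkey (i : ℕ)).2.2
    rw [hHdef] at this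
    simpa [i.isLt] using this

lemma sum_line_apply (n : ℕ) (f : Fin n → SRVert 3 n → ℝ) (v : SRVert 3 n) :
    (∑ i : Fin n, f i) v = ∑ i : Fin n, f i v := by
  rw [Finset.sum_apply]

lemma Xn_eq (n : ℕ) : Xv n n = Jv n - ∑ i : Fin n, Xv n (i : ℕ) := by
  funext v
  have hle := coordLe0 n v
  rw [Pi.sub_apply, sum_line_apply]
  have h1 : ∑ i : Fin n, Xv n (i : ℕ) v
      = ∑ i : Fin n, (if v.1 0 = (i : ℕ) then (1 : ℝ) else 0) := rfl
  rw [h1, sum_fin_ind n (v.1 0) (fun _ => 1)]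
  unfold Xv Jv
  split_ifs
  any_goals (exfalso; omega)
  all_goals norm_num

lemma Yn_eq (n : ℕ) : Yv n n = Jv n - ∑ i : Fin n, Yv n (i : ℕ) := by
  funext v
  have hle := coordLe1 n v
  rw [Pi.sub_apply, sum_line_apply]
  have h1 : ∑ i : Fin n, Yv n (i : ℕ) v
      = ∑ i : Fin n, (if v.1 1 = (i : ℕ) then (1 : ℝ) else 0) := rfl
  rw [h1, sum_fin_ind n (v.1 1) (fun _ => 1)]
  unfold Yv Jv
  split_ifs
  any_goals (exfalso; omega)
  all_goals norm_num

lemma Zn_eq (n : ℕ) : Zv n n = Jv n - ∑ i : Fin n, Zv n (i : ℕ) := by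
  funext v
  have hle := coordLe2 n v
  rw [Pi.sub_apply, sum_line_apply]
  have h1 : ∑ i : Fin n, Zv n (i : ℕ) v
      = ∑ i : Fin n, (if v.1 2 = (i : ℕ) then (1 : ℝ) else 0) := rfl
  rw [h1, sum_fin_ind n (v.1 2) (fun _ => 1)]
  unfold Zv Jv
  split_ifs
  any_goals (exfalso; omega)
  all_goals norm_num

lemma J_mem (n : ℕ) (hn : 1 ≤ n) :
    Jv n ∈ Submodule.span ℝ (Set.range (lineFam n)) := by
  have hJ : Jv n = ∑ p : Fin n × Fin 3, (((n : ℝ) - p.1) / (2 * n)) • lineFam n p := by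
    funext v
    rw [eval_combo']
    have h0 := coordLe0 n v
    have h1 := coordLe1 n v
    have h2 := coordLe2 n v
    have hs : (v.1 0 : ℝ) + v.1 1 + v.1 2 = n := by exact_mod_cast coordSum n v
    have hd : ∀ m : ℕ, m ≤ n →
        (if h : m < n then ((n : ℝ) - m) / (2 * n) else 0) = ((n : ℝ) - m) / (2 * n) := by
      intro m hm
      split_ifs with h
      · rfl
      · have : m = n := by omega
        simp [this]
    rw [hd _ h0, hd _ h1, hd _ h2]
    have hn' : (2 * n : ℝ) ≠ 0 := by positivity
    show (1 : ℝ) = _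
    field_simp
    linarith
  rw [hJ]
  exact Submodule.sum_mem _ fun p _ =>
    Submodule.smul_mem _ _ (Submodule.subset_span ⟨p, rfl⟩)

lemma Xn_mem (n : ℕ) (hn : 1 ≤ n) :
    Xv n n ∈ Submodule.span ℝ (Set.range (lineFam n)) := by
  rw [Xn_eq]
  exact Submodule.sub_mem _ (J_mem n hn)
    (Submodule.sum_mem _ fun i _ => Submodule.subset_span ⟨(i, 0), rfl⟩)

lemma Yn_mem (n : ℕ) (hn : 1 ≤ n) :
    Yv n n ∈ Submodule.span ℝ (Set.range (lineFam n)) := by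
  rw [Yn_eq]
  exact Submodule.sub_mem _ (J_mem n hn)
    (Submodule.sum_mem _ fun i _ => Submodule.subset_span ⟨(i, 1), rfl⟩)

lemma Zn_mem (n : ℕ) (hn : 1 ≤ n) :
    Zv n n ∈ Submodule.span ℝ (Set.range (lineFam n)) := by
  rw [Zn_eq]
  exact Submodule.sub_mem _ (J_mem n hn)
    (Submodule.sum_mem _ fun i _ => Submodule.subset_span ⟨(i, 2), rfl⟩)

lemma span_eq_lineFam (n : ℕ) (hn : 1 ≤ n) :
    Submodule.span ℝ (Set.range (lineFam n))
      = Submodule.span ℝ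
        {w : SRVert 3 n → ℝ | ∃ i ≤ n, w = Xv n i ∨ w = Yv n i ∨ w = Zv n i} := by
  apply le_antisymm
  · apply Submodule.span_mono
    rintro w ⟨⟨i, c⟩, rfl⟩
    refine ⟨(i : ℕ), i.isLt.le, ?_⟩
    fin_cases c
    · exact Or.inl rfl
    · exact Or.inr (Or.inl rfl)
    · exact Or.inr (Or.inr rfl)
  · rw [Submodule.span_le]
    rintro w ⟨i, hi, hw⟩
    rcases Nat.lt_or_ge i n with h | h
    · rcases hw with rfl | rfl | rfl
      · exact Submodule.subset_span ⟨(⟨i, h⟩, 0), rfl⟩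
      · exact Submodule.subset_span ⟨(⟨i, h⟩, 1), rfl⟩
      · exact Submodule.subset_span ⟨(⟨i, h⟩, 2), rfl⟩
    · have hin : i = n := by omega
      rcases hw with rfl | rfl | rfl
      · rw [hin]; exact Xn_mem n hn
      · rw [hin]; exact Yn_mem n hn
      · rw [hin]; exact Zn_mem n hn

/-- the span of all lattice-line vectors has dimension `3n`, and
the `3n` vectors `X_i, Y_i, Z_i` for `0 ≤ i ≤ n-1` form a basis of this span. -/
theorem lattice_line_span (n : ℕ) (hn : 1 ≤ n) :
    Module.finrank ℝ (Submodule.span ℝ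
        {w : SRVert 3 n → ℝ | ∃ i ≤ n, w = Xv n i ∨ w = Yv n i ∨ w = Zv n i}) = 3 * n ∧
    LinearIndependent ℝ
      (fun p : Fin n × Fin 3 => ![Xv n p.1, Yv n p.1, Zv n p.1] p.2) ∧
    Submodule.span ℝ
        (Set.range (fun p : Fin n × Fin 3 => ![Xv n p.1, Yv n p.1, Zv n p.1] p.2))
      = Submodule.span ℝ
        {w : SRVert 3 n → ℝ | ∃ i ≤ n, w = Xv n i ∨ w = Yv n i ∨ w = Zv n i} := by
  have hli := li_lineFam n hn
  have hsp := span_eq_lineFam n hn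
  refine ⟨?_, hli, hsp⟩
  rw [← hsp, finrank_span_eq_card hli]
  simp [mul_comm]
end

section
/- Let n >= 1 and k = floor(n/2). Then the vector R = X_k - Y_k - X_{k+1} + Y_{k+1} is a nonzero eigenvector of the adjacency matrix of SR(3,n), with eigenvalue (n-6)/2 if n is even and (n-3)/2 if n is odd. -/
open Finset

def mk3 {n : ℕ} (a b c : ℕ) (h : a + b + c = n) : SRVert 3 n :=
  ⟨![a, b, c], by simp [Fin.sum_univ_three]; omega⟩

lemma mk3_0 {n a b c : ℕ} (h : a + b + c = n) : (mk3 a b c h).1 0 = a := rfl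
lemma mk3_1 {n a b c : ℕ} (h : a + b + c = n) : (mk3 a b c h).1 1 = b := rfl
lemma mk3_2 {n a b c : ℕ} (h : a + b + c = n) : (mk3 a b c h).1 2 = c := rfl

lemma vert_sum {n : ℕ} (v : SRVert 3 n) : v.1 0 + v.1 1 + v.1 2 = n := by
  have := v.2; rwa [Fin.sum_univ_three] at this

lemma vert_eta {n : ℕ} (v : SRVert 3 n) :
    v = mk3 (v.1 0) (v.1 1) (v.1 2) (vert_sum v) := by
  apply Subtype.ext; funext i; fin_cases i <;> rfl

lemma adj_iff_s10 {n : ℕ} (v w : SRVert 3 n) :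
    (SR 3 n).Adj v w ↔
      ((v.1 0 = w.1 0 ∧ v.1 1 ≠ w.1 1 ∧ v.1 2 ≠ w.1 2) ∨
       (v.1 1 = w.1 1 ∧ v.1 0 ≠ w.1 0 ∧ v.1 2 ≠ w.1 2) ∨
       (v.1 2 = w.1 2 ∧ v.1 0 ≠ w.1 0 ∧ v.1 1 ≠ w.1 1)) := by
  show (Finset.univ.filter fun i => v.1 i ≠ w.1 i).card = 2 ↔ _
  rw [Finset.card_filter, Fin.sum_univ_three]
  by_cases h0 : v.1 0 = w.1 0 <;> by_cases h1 : v.1 1 = w.1 1 <;> by_cases h2 : v.1 2 = w.1 2 <;>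
    simp [Finset.filter_insert, h0, h1, h2] <;> tauto

def mkv (n a b : ℕ) : SRVert 3 n :=
  if h : a + b ≤ n then mk3 a b (n - a - b) (by omega) else ⟨![n, 0, 0], by
    simp [Fin.sum_univ_three]⟩

lemma mkv_0 {n a b : ℕ} (h : a + b ≤ n) : (mkv n a b).1 0 = a := by
  simp [mkv, h, mk3]
lemma mkv_1 {n a b : ℕ} (h : a + b ≤ n) : (mkv n a b).1 1 = b := by
  simp [mkv, h, mk3]
lemma mkv_2 {n a b : ℕ} (h : a + b ≤ n) : (mkv n a b).1 2 = n - a - b := by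
  simp [mkv, h, mk3]

lemma mkv_self {n : ℕ} (v : SRVert 3 n) : mkv n (v.1 0) (v.1 1) = v := by
  have hs := vert_sum v
  apply Subtype.ext
  funext i
  have h : v.1 0 + v.1 1 ≤ n := by omega
  fin_cases i
  · exact mkv_0 h
  · exact mkv_1 h
  · show (mkv n (v.1 0) (v.1 1)).1 2 = v.1 2
    rw [mkv_2 h]; omega

lemma sum_vert {n : ℕ} (f : SRVert 3 n → ℝ) :
    ∑ v, f v = ∑ a ∈ Finset.range (n+1), ∑ b ∈ Finset.range (n+1-a), f (mkv n a b) := by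
  rw [Finset.sum_sigma']
  refine Finset.sum_nbij' (i := fun v => ⟨v.1 0, v.1 1⟩)
    (j := fun p => mkv n p.1 p.2) ?_ ?_ ?_ ?_ ?_
  · intro v _
    have hs := vert_sum v
    simp [Finset.mem_sigma]
    omega
  · intro p _; exact Finset.mem_univ _
  · intro v _; exact mkv_self v
  · intro p hp
    obtain ⟨pa, pb⟩ := p
    simp [Finset.mem_sigma] at hp
    have h : pa + pb ≤ n := by omega
    show (⟨_, _⟩ : (_ : ℕ) × ℕ) = _
    rw [mkv_0 h, mkv_1 h]
  · intro v _
    rw [mkv_self]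

lemma sum_if_eq (m t : ℕ) (ht : t < m) :
    ∑ b ∈ Finset.range m, (if b = t then (1:ℝ) else 0) = 1 := by
  rw [Finset.sum_ite_eq' (Finset.range m) t (fun _ => (1:ℝ))]
  simp [ht]

lemma sum_if_two (m t u : ℕ) (ht : t < m) (hu : u < m) (htu : t ≠ u) :
    ∑ b ∈ Finset.range m, (if b = t ∨ b = u then (1:ℝ) else 0) = 2 := by
  have h : ∀ b, (if b = t ∨ b = u then (1:ℝ) else 0)
      = (if b = t then 1 else 0) + (if b = u then 1 else 0) := by
    intro b
    by_cases h1 : b = t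
    · subst h1; simp [htu]
    · simp [h1]
  rw [Finset.sum_congr rfl fun b _ => h b, Finset.sum_add_distrib,
    sum_if_eq m t ht, sum_if_eq m u hu]
  norm_num

lemma sum_if_ne (m t : ℕ) (ht : t < m) :
    ∑ b ∈ Finset.range m, (if b ≠ t then (1:ℝ) else 0) = m - 1 := by
  have h : ∀ b, (if b ≠ t then (1:ℝ) else 0) = 1 - (if b = t then 1 else 0) := by
    intro b; by_cases hb : b = t <;> simp [hb]
  rw [Finset.sum_congr rfl fun b _ => h b, Finset.sum_sub_distrib, sum_if_eq m t ht]
  simp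

lemma sum_if_eq_and (m t : ℕ) (P : Prop) [Decidable P] (ht : P → t < m) :
    ∑ b ∈ Finset.range m, (if b = t ∧ P then (1:ℝ) else 0) = if P then 1 else 0 := by
  by_cases hP : P
  · simp only [hP, and_true, if_true]
    exact sum_if_eq m t (ht hP)
  · simp [hP]

lemma sum_if_lt_ne (N m t : ℕ) (ht : t < m) (hm : m ≤ N) :
    ∑ a ∈ Finset.range N, (if a < m ∧ a ≠ t then (1:ℝ) else 0) = m - 1 := by
  have h : ∀ a, (if a < m ∧ a ≠ t then (1:ℝ) else 0)
      = (if a < m then 1 else 0) - (if a = t then 1 else 0) := by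
    intro a
    by_cases h2 : a = t
    · subst h2; simp [ht]
    · by_cases h1 : a < m <;> simp [h1, h2]
  rw [Finset.sum_congr rfl fun a _ => h a, Finset.sum_sub_distrib,
    sum_if_eq N t (by omega)]
  have : ∑ a ∈ Finset.range N, (if a < m then (1:ℝ) else 0) = m := by
    rw [← Finset.sum_filter]
    rw [show Finset.filter (fun a => a < m) (Finset.range N) = Finset.range m by
      ext x; simp; omega]
    simp
  rw [this]

lemma mulVec_Xv (n i : ℕ) (v : SRVert 3 n) :
    ((SR 3 n).adjMatrix ℝ).mulVec (Xv n i) v =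
      if v.1 0 = i then (n : ℝ) - i
      else (if i + v.1 1 ≤ n then 1 else 0) + (if i + v.1 2 ≤ n then 1 else 0) := by
  have hs := vert_sum v
  rw [SimpleGraph.adjMatrix_mulVec_apply, SimpleGraph.neighborFinset_eq_filter,
    Finset.sum_filter, sum_vert (fun w => if (SR 3 n).Adj v w then Xv n i w else 0)]
  by_cases hai : v.1 0 = i
  · rw [if_pos hai]
    have hrw : ∀ a' ∈ Finset.range (n+1), ∀ b' ∈ Finset.range (n+1-a'),
        (if (SR 3 n).Adj v (mkv n a' b') then Xv n i (mkv n a' b') else 0)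
        = if a' = i ∧ b' ≠ v.1 1 then (1:ℝ) else 0 := by
      intro a' ha' b' hb'
      simp only [Finset.mem_range] at ha' hb'
      have h : a' + b' ≤ n := by omega
      simp only [Xv, adj_iff_s10, mkv_0 h, mkv_1 h, mkv_2 h]
      split_ifs <;> first | rfl | (exfalso; omega)
    rw [Finset.sum_congr rfl fun a' ha' => Finset.sum_congr rfl fun b' hb' => hrw a' ha' b' hb']
    rw [Finset.sum_eq_single_of_mem i (by simp; omega)
      (fun a' _ hne => Finset.sum_eq_zero fun b' _ => by
        rw [if_neg]; exact fun hc => hne hc.1)]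
    simp only [true_and]
    rw [sum_if_ne (n+1-i) (v.1 1) (by omega)]
    push_cast [Nat.cast_sub (show i ≤ n+1 by omega)]
    ring
  · rw [if_neg hai]
    by_cases hi : i ≤ n
    · by_cases h1 : i + v.1 1 ≤ n <;> by_cases h2 : i + v.1 2 ≤ n
      · have hrw : ∀ a' ∈ Finset.range (n+1), ∀ b' ∈ Finset.range (n+1-a'),
            (if (SR 3 n).Adj v (mkv n a' b') then Xv n i (mkv n a' b') else 0)
            = if a' = i ∧ (b' = v.1 1 ∨ b' = n - i - v.1 2) then (1:ℝ) else 0 := by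
          intro a' ha' b' hb'
          simp only [Finset.mem_range] at ha' hb'
          have h : a' + b' ≤ n := by omega
          simp only [Xv, adj_iff_s10, mkv_0 h, mkv_1 h, mkv_2 h]
          split_ifs <;> first | rfl | (exfalso; omega)
        rw [Finset.sum_congr rfl fun a' ha' => Finset.sum_congr rfl fun b' hb' => hrw a' ha' b' hb']
        rw [Finset.sum_eq_single_of_mem i (by simp; omega)
          (fun a' _ hne => Finset.sum_eq_zero fun b' _ => by
            rw [if_neg]; exact fun hc => hne hc.1)]
        simp only [true_and]
        rw [sum_if_two (n+1-i) (v.1 1) (n - i - v.1 2) (by omega) (by omega) (by omega)]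
        simp [h1, h2]
        norm_num
      · have hrw : ∀ a' ∈ Finset.range (n+1), ∀ b' ∈ Finset.range (n+1-a'),
            (if (SR 3 n).Adj v (mkv n a' b') then Xv n i (mkv n a' b') else 0)
            = if a' = i ∧ b' = v.1 1 then (1:ℝ) else 0 := by
          intro a' ha' b' hb'
          simp only [Finset.mem_range] at ha' hb'
          have h : a' + b' ≤ n := by omega
          simp only [Xv, adj_iff_s10, mkv_0 h, mkv_1 h, mkv_2 h]
          split_ifs <;> first | rfl | (exfalso; omega)
        rw [Finset.sum_congr rfl fun a' ha' => Finset.sum_congr rfl fun b' hb' => hrw a' ha' b' hb']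
        rw [Finset.sum_eq_single_of_mem i (by simp; omega)
          (fun a' _ hne => Finset.sum_eq_zero fun b' _ => by
            rw [if_neg]; exact fun hc => hne hc.1)]
        simp only [true_and]
        rw [sum_if_eq (n+1-i) (v.1 1) (by omega)]
        simp [h1, h2]
      · have hrw : ∀ a' ∈ Finset.range (n+1), ∀ b' ∈ Finset.range (n+1-a'),
            (if (SR 3 n).Adj v (mkv n a' b') then Xv n i (mkv n a' b') else 0)
            = if a' = i ∧ b' = n - i - v.1 2 then (1:ℝ) else 0 := by
          intro a' ha' b' hb'
          simp only [Finset.mem_range] at ha' hb'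
          have h : a' + b' ≤ n := by omega
          simp only [Xv, adj_iff_s10, mkv_0 h, mkv_1 h, mkv_2 h]
          split_ifs <;> first | rfl | (exfalso; omega)
        rw [Finset.sum_congr rfl fun a' ha' => Finset.sum_congr rfl fun b' hb' => hrw a' ha' b' hb']
        rw [Finset.sum_eq_single_of_mem i (by simp; omega)
          (fun a' _ hne => Finset.sum_eq_zero fun b' _ => by
            rw [if_neg]; exact fun hc => hne hc.1)]
        simp only [true_and]
        rw [sum_if_eq (n+1-i) (n - i - v.1 2) (by omega)]
        simp [h1, h2]
      · have hrw : ∀ a' ∈ Finset.range (n+1), ∀ b' ∈ Finset.range (n+1-a'),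
            (if (SR 3 n).Adj v (mkv n a' b') then Xv n i (mkv n a' b') else 0)
            = (0:ℝ) := by
          intro a' ha' b' hb'
          simp only [Finset.mem_range] at ha' hb'
          have h : a' + b' ≤ n := by omega
          simp only [Xv, adj_iff_s10, mkv_0 h, mkv_1 h, mkv_2 h]
          split_ifs <;> first | rfl | (exfalso; omega)
        rw [Finset.sum_congr rfl fun a' ha' => Finset.sum_congr rfl fun b' hb' => hrw a' ha' b' hb']
        simp [h1, h2]
    · have h1 : ¬ (i + v.1 1 ≤ n) := by omega
      have h2 : ¬ (i + v.1 2 ≤ n) := by omega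
      have hrw : ∀ a' ∈ Finset.range (n+1), ∀ b' ∈ Finset.range (n+1-a'),
          (if (SR 3 n).Adj v (mkv n a' b') then Xv n i (mkv n a' b') else 0)
          = (0:ℝ) := by
        intro a' ha' b' hb'
        simp only [Finset.mem_range] at ha' hb'
        have h : a' + b' ≤ n := by omega
        simp only [Xv, adj_iff_s10, mkv_0 h, mkv_1 h, mkv_2 h]
        split_ifs <;> first | rfl | (exfalso; omega)
      rw [Finset.sum_congr rfl fun a' ha' => Finset.sum_congr rfl fun b' hb' => hrw a' ha' b' hb']
      simp [h1, h2]

lemma mulVec_Yv (n j : ℕ) (v : SRVert 3 n) :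
    ((SR 3 n).adjMatrix ℝ).mulVec (Yv n j) v =
      if v.1 1 = j then (n : ℝ) - j
      else (if j + v.1 0 ≤ n then 1 else 0) + (if j + v.1 2 ≤ n then 1 else 0) := by
  have hs := vert_sum v
  rw [SimpleGraph.adjMatrix_mulVec_apply, SimpleGraph.neighborFinset_eq_filter,
    Finset.sum_filter, sum_vert (fun w => if (SR 3 n).Adj v w then Yv n j w else 0)]
  by_cases hbj : v.1 1 = j
  · rw [if_pos hbj]
    have hinner : ∀ a' ∈ Finset.range (n+1),
        (∑ b' ∈ Finset.range (n+1-a'),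
          (if (SR 3 n).Adj v (mkv n a' b') then Yv n j (mkv n a' b') else 0))
        = if a' < n+1-j ∧ a' ≠ v.1 0 then (1:ℝ) else 0 := by
      intro a' ha'
      simp only [Finset.mem_range] at ha'
      have hterm : ∀ b' ∈ Finset.range (n+1-a'),
          (if (SR 3 n).Adj v (mkv n a' b') then Yv n j (mkv n a' b') else 0)
          = if b' = j ∧ (a' < n+1-j ∧ a' ≠ v.1 0) then (1:ℝ) else 0 := by
        intro b' hb'
        simp only [Finset.mem_range] at hb'
        have h : a' + b' ≤ n := by omega
        simp only [Yv, adj_iff_s10, mkv_0 h, mkv_1 h, mkv_2 h]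
        split_ifs <;> first | rfl | (exfalso; omega)
      rw [Finset.sum_congr rfl hterm]
      exact sum_if_eq_and _ j _ (fun hP => by omega)
    rw [Finset.sum_congr rfl hinner]
    rw [sum_if_lt_ne (n+1) (n+1-j) (v.1 0) (by omega) (by omega)]
    push_cast [Nat.cast_sub (show j ≤ n+1 by omega)]
    ring
  · rw [if_neg hbj]
    by_cases h1 : j + v.1 0 ≤ n <;> by_cases h2 : j + v.1 2 ≤ n
    · have hinner : ∀ a' ∈ Finset.range (n+1),
          (∑ b' ∈ Finset.range (n+1-a'),
            (if (SR 3 n).Adj v (mkv n a' b') then Yv n j (mkv n a' b') else 0))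
          = if a' = v.1 0 ∨ a' = n - j - v.1 2 then (1:ℝ) else 0 := by
        intro a' ha'
        simp only [Finset.mem_range] at ha'
        have hterm : ∀ b' ∈ Finset.range (n+1-a'),
            (if (SR 3 n).Adj v (mkv n a' b') then Yv n j (mkv n a' b') else 0)
            = if b' = j ∧ (a' = v.1 0 ∨ a' = n - j - v.1 2) then (1:ℝ) else 0 := by
          intro b' hb'
          simp only [Finset.mem_range] at hb'
          have h : a' + b' ≤ n := by omega
          simp only [Yv, adj_iff_s10, mkv_0 h, mkv_1 h, mkv_2 h]
          split_ifs <;> first | rfl | (exfalso; omega)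
        rw [Finset.sum_congr rfl hterm]
        exact sum_if_eq_and _ j _ (fun hP => by omega)
      rw [Finset.sum_congr rfl hinner]
      rw [sum_if_two (n+1) (v.1 0) (n - j - v.1 2) (by omega) (by omega) (by omega)]
      simp [h1, h2]
      norm_num
    · have hinner : ∀ a' ∈ Finset.range (n+1),
          (∑ b' ∈ Finset.range (n+1-a'),
            (if (SR 3 n).Adj v (mkv n a' b') then Yv n j (mkv n a' b') else 0))
          = if a' = v.1 0 then (1:ℝ) else 0 := by
        intro a' ha'
        simp only [Finset.mem_range] at ha'
        have hterm : ∀ b' ∈ Finset.range (n+1-a'),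
            (if (SR 3 n).Adj v (mkv n a' b') then Yv n j (mkv n a' b') else 0)
            = if b' = j ∧ a' = v.1 0 then (1:ℝ) else 0 := by
          intro b' hb'
          simp only [Finset.mem_range] at hb'
          have h : a' + b' ≤ n := by omega
          simp only [Yv, adj_iff_s10, mkv_0 h, mkv_1 h, mkv_2 h]
          split_ifs <;> first | rfl | (exfalso; omega)
        rw [Finset.sum_congr rfl hterm]
        exact sum_if_eq_and _ j _ (fun hP => by omega)
      rw [Finset.sum_congr rfl hinner]
      rw [sum_if_eq (n+1) (v.1 0) (by omega)]
      simp [h1, h2]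
    · have hinner : ∀ a' ∈ Finset.range (n+1),
          (∑ b' ∈ Finset.range (n+1-a'),
            (if (SR 3 n).Adj v (mkv n a' b') then Yv n j (mkv n a' b') else 0))
          = if a' = n - j - v.1 2 then (1:ℝ) else 0 := by
        intro a' ha'
        simp only [Finset.mem_range] at ha'
        have hterm : ∀ b' ∈ Finset.range (n+1-a'),
            (if (SR 3 n).Adj v (mkv n a' b') then Yv n j (mkv n a' b') else 0)
            = if b' = j ∧ a' = n - j - v.1 2 then (1:ℝ) else 0 := by
          intro b' hb'
          simp only [Finset.mem_range] at hb'
          have h : a' + b' ≤ n := by omega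
          simp only [Yv, adj_iff_s10, mkv_0 h, mkv_1 h, mkv_2 h]
          split_ifs <;> first | rfl | (exfalso; omega)
        rw [Finset.sum_congr rfl hterm]
        exact sum_if_eq_and _ j _ (fun hP => by omega)
      rw [Finset.sum_congr rfl hinner]
      rw [sum_if_eq (n+1) (n - j - v.1 2) (by omega)]
      simp [h1, h2]
    · have hinner : ∀ a' ∈ Finset.range (n+1),
          (∑ b' ∈ Finset.range (n+1-a'),
            (if (SR 3 n).Adj v (mkv n a' b') then Yv n j (mkv n a' b') else 0))
          = (0:ℝ) := by
        intro a' ha'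
        simp only [Finset.mem_range] at ha'
        apply Finset.sum_eq_zero
        intro b' hb'
        simp only [Finset.mem_range] at hb'
        have h : a' + b' ≤ n := by omega
        simp only [Yv, adj_iff_s10, mkv_0 h, mkv_1 h, mkv_2 h]
        split_ifs <;> first | rfl | (exfalso; omega)
      rw [Finset.sum_congr rfl hinner]
      simp [h1, h2]

set_option maxHeartbeats 1000000 in
lemma keyEven (m a b c : ℕ) (hs : a + b + c = m + m) (hn : 1 ≤ m) :
    ((if a = m then ((m+m : ℕ) : ℝ) - m
      else (if m + b ≤ m+m then 1 else 0) + (if m + c ≤ m+m then 1 else 0))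
     - (if b = m then ((m+m : ℕ) : ℝ) - m
      else (if m + a ≤ m+m then 1 else 0) + (if m + c ≤ m+m then 1 else 0))
     - (if a = m+1 then ((m+m : ℕ) : ℝ) - ((m+1 : ℕ) : ℝ)
      else (if m+1 + b ≤ m+m then 1 else 0) + (if m+1 + c ≤ m+m then 1 else 0))
     + (if b = m+1 then ((m+m : ℕ) : ℝ) - ((m+1 : ℕ) : ℝ)
      else (if m+1 + a ≤ m+m then 1 else 0) + (if m+1 + c ≤ m+m then 1 else 0)))
    = (((m+m : ℕ) : ℝ) - 6)/2 *
      ((if a = m then (1:ℝ) else 0) - (if b = m then 1 else 0)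
       - (if a = m+1 then 1 else 0) + (if b = m+1 then 1 else 0)) := by
  split_ifs <;> first | (exfalso; omega) | (rify at *; push_cast at *; nlinarith [sq_nonneg (0:ℝ)])

set_option maxHeartbeats 1000000 in
lemma keyOdd (m a b c : ℕ) (hs : a + b + c = 2*m+1) :
    ((if a = m then ((2*m+1 : ℕ) : ℝ) - m
      else (if m + b ≤ 2*m+1 then 1 else 0) + (if m + c ≤ 2*m+1 then 1 else 0))
     - (if b = m then ((2*m+1 : ℕ) : ℝ) - m
      else (if m + a ≤ 2*m+1 then 1 else 0) + (if m + c ≤ 2*m+1 then 1 else 0))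
     - (if a = m+1 then ((2*m+1 : ℕ) : ℝ) - ((m+1 : ℕ) : ℝ)
      else (if m+1 + b ≤ 2*m+1 then 1 else 0) + (if m+1 + c ≤ 2*m+1 then 1 else 0))
     + (if b = m+1 then ((2*m+1 : ℕ) : ℝ) - ((m+1 : ℕ) : ℝ)
      else (if m+1 + a ≤ 2*m+1 then 1 else 0) + (if m+1 + c ≤ 2*m+1 then 1 else 0)))
    = (((2*m+1 : ℕ) : ℝ) - 3)/2 *
      ((if a = m then (1:ℝ) else 0) - (if b = m then 1 else 0)
       - (if a = m+1 then 1 else 0) + (if b = m+1 then 1 else 0)) := by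
  split_ifs <;> first | (exfalso; omega) | (rify at *; push_cast at *; linarith)

/-- with `k = ⌊n/2⌋`, the vector `R = X_k - Y_k - X_{k+1} + Y_{k+1}`
is a nonzero eigenvector of the adjacency matrix of `SR(3,n)`, with eigenvalue
`(n-6)/2` for even `n` and `(n-3)/2` for odd `n`. -/
theorem R_eigenvector (n : ℕ) (hn : 1 ≤ n) :
    Xv n (n/2) - Yv n (n/2) - Xv n (n/2 + 1) + Yv n (n/2 + 1) ≠ 0 ∧
    ((SR 3 n).adjMatrix ℝ).mulVec
        (Xv n (n/2) - Yv n (n/2) - Xv n (n/2 + 1) + Yv n (n/2 + 1))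
      = (if Even n then ((n : ℝ) - 6)/2 else ((n : ℝ) - 3)/2) •
        (Xv n (n/2) - Yv n (n/2) - Xv n (n/2 + 1) + Yv n (n/2 + 1)) := by
  constructor
  · intro h0
    rcases Nat.even_or_odd n with he | ho
    · obtain ⟨m, rfl⟩ := he
      have hm1 : 1 ≤ m := by omega
      have hk : (m + m) / 2 = m := by omega
      have := congrFun h0 (mk3 m 0 m (by omega))
      have e1 : ¬ ((0:ℕ) = m) := by omega
      have e2 : ¬ (m = m + 1) := by omega
      have e3 : ¬ ((0:ℕ) = m + 1) := by omega
      simp [mk3, Xv, Yv, hk, e1, e2, e3] at this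
    · obtain ⟨m, rfl⟩ := ho
      have hk : (2 * m + 1) / 2 = m := by omega
      have := congrFun h0 (mk3 m (m + 1) 0 (by omega))
      have e2 : ¬ (m = m + 1) := by omega
      have e3 : ¬ (m + 1 = m) := by omega
      simp [mk3, Xv, Yv, hk, e2, e3] at this
  · funext v
    have hs := vert_sum v
    have hdec : ((SR 3 n).adjMatrix ℝ).mulVec
        (Xv n (n/2) - Yv n (n/2) - Xv n (n/2 + 1) + Yv n (n/2 + 1)) v
        = ((SR 3 n).adjMatrix ℝ).mulVec (Xv n (n/2)) v
          - ((SR 3 n).adjMatrix ℝ).mulVec (Yv n (n/2)) v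
          - ((SR 3 n).adjMatrix ℝ).mulVec (Xv n (n/2 + 1)) v
          + ((SR 3 n).adjMatrix ℝ).mulVec (Yv n (n/2 + 1)) v := by
      simp only [Matrix.mulVec_add, Matrix.mulVec_sub, Pi.add_apply, Pi.sub_apply]
    rw [hdec, mulVec_Xv, mulVec_Yv, mulVec_Xv, mulVec_Yv]
    simp only [Pi.smul_apply, Pi.add_apply, Pi.sub_apply, smul_eq_mul, Xv, Yv]
    rcases Nat.even_or_odd n with he | ho
    · obtain ⟨m, rfl⟩ := he
      have hev : Even (m + m) := ⟨m, rfl⟩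
      rw [if_pos hev]
      rw [show (m + m) / 2 = m by omega]
      exact keyEven m (v.1 0) (v.1 1) (v.1 2) hs (by omega)
    · obtain ⟨m, rfl⟩ := ho
      have hodd : ¬ Even (2 * m + 1) := by rw [Nat.even_iff]; omega
      rw [if_neg hodd]
      rw [show (2 * m + 1) / 2 = m by omega]
      exact keyOdd m (v.1 0) (v.1 1) (v.1 2) hs
end

section
/- Let d, n be positive integers, and let p, w in R^d be such that the d! points {p + sigma(w) : sigma in S_d} are distinct vertices of SR(d,n) (where sigma(w) permutes the coordinates of w). Then the signed characteristic vector H_{p,w} = sum over sigma in S_d of sign(sigma) * e_{p+sigma(w)} is an eigenvector of the adjacency matrix of SR(d,n) with eigenvalue -binomial(d,2). -/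
open Finset

-- aux
open Finset

open scoped Classical

lemma pair_cases' {α : Type*} [DecidableEq α] {a b c e : α} (hab : a ≠ b) (hce : c ≠ e)
    (h : ({a,b}:Finset α) = {c,e}) : Equiv.swap a b = Equiv.swap c e := by
  have ha : a ∈ ({c,e}:Finset α) := by rw [← h]; simp
  have hb : b ∈ ({c,e}:Finset α) := by rw [← h]; simp
  simp only [Finset.mem_insert, Finset.mem_singleton] at ha hb
  rcases ha with rfl|rfl <;> rcases hb with rfl|rfl <;> first
    | exact absurd rfl hab | rfl | exact Equiv.swap_comm _ _

lemma card_isSwap (d : ℕ) :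
    (Finset.univ.filter (fun π : Equiv.Perm (Fin d) => π.IsSwap)).card = d.choose 2 := by
  have h : (Finset.univ.filter (fun π : Equiv.Perm (Fin d) => π.IsSwap)).card
      = ((Finset.univ : Finset (Fin d)).powersetCard 2).card := by
    apply Finset.card_bij (fun π _ => π.support)
    · intro π hπ
      rw [Finset.mem_powersetCard]
      exact ⟨Finset.subset_univ _, Equiv.Perm.card_support_eq_two.2 (Finset.mem_filter.1 hπ).2⟩
    · intro π hπ ρ hρ hsup
      obtain ⟨a, b, hab, rfl⟩ := (Finset.mem_filter.1 hπ).2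
      obtain ⟨c, e, hce, rfl⟩ := (Finset.mem_filter.1 hρ).2
      rw [Equiv.Perm.support_swap hab, Equiv.Perm.support_swap hce] at hsup
      exact pair_cases' hab hce hsup
    · intro s hs
      rw [Finset.mem_powersetCard] at hs
      obtain ⟨a, b, hab, rfl⟩ := Finset.card_eq_two.1 hs.2
      exact ⟨Equiv.swap a b, Finset.mem_filter.2 ⟨Finset.mem_univ _, ⟨a,b,hab,rfl⟩⟩,
        Equiv.Perm.support_swap hab⟩
  rw [h, Finset.card_powersetCard, Finset.card_univ, Fintype.card_fin]

lemma agree_last {d n : ℕ} (x y : SRVert d n) (b : Fin d)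
    (h : ∀ i, i ≠ b → x.1 i = y.1 i) : x.1 b = y.1 b := by
  have hx := x.2; have hy := y.2
  rw [← Finset.add_sum_erase _ _ (Finset.mem_univ b)] at hx hy
  have he : ∑ i ∈ Finset.univ.erase b, x.1 i = ∑ i ∈ Finset.univ.erase b, y.1 i :=
    Finset.sum_congr rfl fun i hi => h i (Finset.mem_erase.1 hi).1
  omega
/-- the signed characteristic vector of a lattice permutohedron
`{p + σ(w) : σ ∈ S_d}` contained in `V(d,n)` is an eigenvector of the adjacency
matrix of `SR(d,n)` with eigenvalue `-binom(d,2)`. -/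
theorem permutohedron_eigenvector (d n : ℕ) (hd : 1 ≤ d) (hn : 1 ≤ n)
    (p w : Fin d → ℝ) (f : Equiv.Perm (Fin d) → SRVert d n)
    (hf : ∀ σ i, ((f σ).1 i : ℝ) = p i + w (σ⁻¹ i))
    (hinj : Function.Injective f) :
    (∑ σ : Equiv.Perm (Fin d),
        ((Equiv.Perm.sign σ : ℤ) : ℝ) • (fun v => if v = f σ then (1:ℝ) else 0)) ≠ 0 ∧
    ((SR d n).adjMatrix ℝ).mulVec
        (∑ σ : Equiv.Perm (Fin d),
          ((Equiv.Perm.sign σ : ℤ) : ℝ) • (fun v => if v = f σ then (1:ℝ) else 0))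
      = (-(d.choose 2) : ℝ) •
        (∑ σ : Equiv.Perm (Fin d),
          ((Equiv.Perm.sign σ : ℤ) : ℝ) • (fun v => if v = f σ then (1:ℝ) else 0)) := by
  set ε : Equiv.Perm (Fin d) → ℝ := fun σ => ((Equiv.Perm.sign σ : ℤ) : ℝ) with hε
  have hmul : ∀ α β : Equiv.Perm (Fin d), ε (α * β) = ε α * ε β := by
    intro α β; rw [hε]; simp [Equiv.Perm.sign_mul]
  set E : SRVert d n → ℝ := ∑ σ : Equiv.Perm (Fin d),
      ε σ • (fun v => if v = f σ then (1:ℝ) else 0) with hEdef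
  -- pointwise value of E
  have hE : ∀ u, E u = ∑ σ : Equiv.Perm (Fin d), (if u = f σ then ε σ else 0) := by
    intro u
    rw [hEdef, Finset.sum_apply]
    exact Finset.sum_congr rfl fun σ _ => by
      simp [Pi.smul_apply, smul_eq_mul, mul_ite]
  -- w is injective
  have hw : Function.Injective w := by
    intro a b hab
    by_contra hne
    have hfe : f (Equiv.swap a b) = f 1 := by
      apply Subtype.ext; funext i
      have h1 := hf (Equiv.swap a b) i
      have h2 := hf 1 i
      rw [Equiv.swap_inv] at h1
      have hww : w (Equiv.swap a b i) = w i := by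
        rcases Equiv.swap_apply_def a b i with _
        by_cases hia : i = a
        · subst hia; rw [Equiv.swap_apply_left]; exact hab.symm
        by_cases hib : i = b
        · subst hib; rw [Equiv.swap_apply_right]; exact hab
        · rw [Equiv.swap_apply_of_ne_of_ne hia hib]
      have : (((f (Equiv.swap a b)).1 i : ℝ)) = ((f 1).1 i : ℝ) := by
        rw [h1, h2, hww]; simp
      exact_mod_cast this
    exact hne (by simpa using (Equiv.swap_eq_one_iff).1 (hinj hfe))
  have hsignswap : ∀ (a b : Fin d) (σ : Equiv.Perm (Fin d)), a ≠ b →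
      ε (Equiv.swap a b * σ) = -ε σ := by
    intro a b σ hab
    rw [hε]
    simp [Equiv.Perm.sign_mul, Equiv.Perm.sign_swap hab]
  -- value of E on the permutohedron
  have hEf : ∀ τ, E (f τ) = ε τ := by
    intro τ
    rw [hE]
    rw [Finset.sum_eq_single τ]
    · simp
    · intro σ _ hστ
      rw [if_neg (fun h => hστ (hinj h).symm)]
    · intro h; exact absurd (Finset.mem_univ τ) h
  -- value of E off the permutohedron
  have hEn : ∀ v, (∀ σ, v ≠ f σ) → E v = 0 := by
    intro v hv
    rw [hE]
    exact Finset.sum_eq_zero fun σ _ => if_neg (hv σ)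
  constructor
  · intro h0
    have h1 : E (f 1) = 0 := by rw [hEdef] at h0 ⊢; rw [h0]; rfl
    rw [hEf] at h1
    simp [hε] at h1
  -- the eigenvector equation
  funext v
  rw [SimpleGraph.adjMatrix_mulVec_apply]
  have hLHS : ∑ u ∈ (SR d n).neighborFinset v, E u
      = ∑ σ : Equiv.Perm (Fin d), (if (SR d n).Adj v (f σ) then ε σ else 0) := by
    calc ∑ u ∈ (SR d n).neighborFinset v, E u
        = ∑ u ∈ (SR d n).neighborFinset v, ∑ σ : Equiv.Perm (Fin d),
            (if u = f σ then ε σ else 0) := Finset.sum_congr rfl fun u _ => hE u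
      _ = ∑ σ : Equiv.Perm (Fin d), ∑ u ∈ (SR d n).neighborFinset v,
            (if u = f σ then ε σ else 0) := Finset.sum_comm
      _ = ∑ σ : Equiv.Perm (Fin d), (if f σ ∈ (SR d n).neighborFinset v then ε σ else 0) :=
            Finset.sum_congr rfl fun σ _ => Finset.sum_ite_eq' _ _ _
      _ = _ := Finset.sum_congr rfl fun σ _ => by simp [SimpleGraph.mem_neighborFinset]
  rw [hLHS]
  rw [show ((-(d.choose 2) : ℝ) • E) v = (-(d.choose 2) : ℝ) * E v from rfl]
  by_cases hvr : ∃ τ, v = f τ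
  · obtain ⟨τ, rfl⟩ := hvr
    -- adjacency characterization on the permutohedron
    have hfilter : ∀ σ : Equiv.Perm (Fin d),
        (Finset.univ.filter fun i => (f τ).1 i ≠ (f σ).1 i) = (σ * τ⁻¹).support := by
      intro σ
      ext i
      simp only [Finset.mem_filter, Finset.mem_univ, true_and, Equiv.Perm.mem_support,
        Equiv.Perm.mul_apply]
      constructor
      · intro h hc
        apply h
        have h2 : τ⁻¹ i = σ⁻¹ i := by
          conv_rhs => rw [← hc]
          simp
        have : ((f τ).1 i : ℝ) = ((f σ).1 i : ℝ) := by rw [hf, hf, h2]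
        exact_mod_cast this
      · intro h hc
        apply h
        have hc' : ((f τ).1 i : ℝ) = ((f σ).1 i : ℝ) := Nat.cast_inj.2 hc
        rw [hf, hf] at hc'
        have h2 : τ⁻¹ i = σ⁻¹ i := hw (by linarith)
        rw [h2]; simp
    have hadj : ∀ σ : Equiv.Perm (Fin d),
        (SR d n).Adj (f τ) (f σ) ↔ (σ * τ⁻¹).IsSwap := by
      intro σ
      show (Finset.univ.filter fun i => (f τ).1 i ≠ (f σ).1 i).card = 2 ↔ _
      rw [hfilter σ]
      exact Equiv.Perm.card_support_eq_two
    rw [hEf]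
    calc ∑ σ : Equiv.Perm (Fin d), (if (SR d n).Adj (f τ) (f σ) then ε σ else 0)
        = ∑ σ : Equiv.Perm (Fin d), (if (σ * τ⁻¹).IsSwap then ε σ else 0) :=
          Finset.sum_congr rfl fun σ _ => by rw [if_congr (hadj σ) rfl rfl]
      _ = ∑ π : Equiv.Perm (Fin d), (if π.IsSwap then ε π * ε τ else 0) := by
          apply Fintype.sum_equiv (Equiv.mulRight τ⁻¹)
          intro σ
          have h1 : (Equiv.mulRight τ⁻¹) σ = σ * τ⁻¹ := rfl
          rw [h1]
          by_cases hs : (σ * τ⁻¹).IsSwap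
          · rw [if_pos hs, if_pos hs, ← hmul, inv_mul_cancel_right]
          · rw [if_neg hs, if_neg hs]
      _ = ∑ π ∈ Finset.univ.filter (fun π : Equiv.Perm (Fin d) => π.IsSwap), ε π * ε τ := by
          rw [Finset.sum_filter]
      _ = ∑ π ∈ Finset.univ.filter (fun π : Equiv.Perm (Fin d) => π.IsSwap), (-1) * ε τ := by
          apply Finset.sum_congr rfl
          intro π hπ
          obtain ⟨a, b, hab, rfl⟩ := (Finset.mem_filter.1 hπ).2
          rw [hε]; simp [Equiv.Perm.sign_swap hab]
      _ = (-(d.choose 2) : ℝ) * ε τ := by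
          rw [Finset.sum_const, card_isSwap]
          simp only [nsmul_eq_mul]
          ring
  · -- v is not on the permutohedron
    push_neg at hvr
    rw [hEn v hvr, mul_zero]
    -- involution argument
    set D : Equiv.Perm (Fin d) → Finset (Fin d) :=
      fun σ => Finset.univ.filter (fun i => v.1 i ≠ (f σ).1 i) with hD
    have hadjD : ∀ σ, (SR d n).Adj v (f σ) ↔ (D σ).card = 2 := fun σ => Iff.rfl
    -- coordinates of f (swap a b * σ)
    have hco : ∀ (a b : Fin d) (σ : Equiv.Perm (Fin d)) (i : Fin d),
        ((f (Equiv.swap a b * σ)).1 i : ℝ) = p i + w (σ⁻¹ (Equiv.swap a b i)) := by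
      intro a b σ i
      rw [hf]
      simp [mul_inv_rev, Equiv.swap_inv]
    -- off the pair, coordinates don't change
    have hoff : ∀ (σ : Equiv.Perm (Fin d)) (a b : Fin d), D σ = {a, b} →
        ∀ i, i ≠ a → i ≠ b → v.1 i = (f (Equiv.swap a b * σ)).1 i := by
      intro σ a b hs i hia hib
      have h1 : v.1 i = (f σ).1 i := by
        by_contra hne
        have hmem : i ∈ D σ := Finset.mem_filter.2 ⟨Finset.mem_univ _, hne⟩
        rw [hs, Finset.mem_insert, Finset.mem_singleton] at hmem
        tauto
      have h2 : ((f (Equiv.swap a b * σ)).1 i : ℝ) = ((f σ).1 i : ℝ) := by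
        rw [hco, hf, Equiv.swap_apply_of_ne_of_ne hia hib]
      have h2' : (f (Equiv.swap a b * σ)).1 i = (f σ).1 i := by exact_mod_cast h2
      omega
    -- on the pair, coordinates must change
    have keyd : ∀ (σ : Equiv.Perm (Fin d)) (a b : Fin d), a ≠ b → D σ = {a, b} →
        v.1 a ≠ (f (Equiv.swap a b * σ)).1 a := by
      intro σ a b hab hs hEq
      apply hvr (Equiv.swap a b * σ)
      have hall : ∀ i, i ≠ b → v.1 i = (f (Equiv.swap a b * σ)).1 i := by
        intro i hib
        by_cases hia : i = a
        · subst hia; exact hEq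
        · exact hoff σ a b hs i hia hib
      have hb := agree_last v (f (Equiv.swap a b * σ)) b hall
      apply Subtype.ext; funext i
      by_cases hib : i = b
      · subst hib; exact hb
      · exact hall i hib
    -- the differing set after swapping
    have key : ∀ (σ : Equiv.Perm (Fin d)) (a b : Fin d), a ≠ b → D σ = {a, b} →
        D (Equiv.swap a b * σ) = {a, b} := by
      intro σ a b hab hs
      have hda := keyd σ a b hab hs
      have hdb : v.1 b ≠ (f (Equiv.swap a b * σ)).1 b := by
        have := keyd σ b a hab.symm (by rw [hs, Finset.pair_comm])
        rwa [Equiv.swap_comm b a] at this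
      ext i
      rw [hD]
      simp only [Finset.mem_filter, Finset.mem_univ, true_and, Finset.mem_insert,
        Finset.mem_singleton]
      constructor
      · intro h
        by_contra hc
        push_neg at hc
        exact h (hoff σ a b hs i hc.1 hc.2)
      · rintro (rfl | rfl)
        · exact hda
        · exact hdb
    -- existence of the differing pair
    have hC : ∀ σ : Equiv.Perm (Fin d), (SR d n).Adj v (f σ) →
        ∃ q : Fin d × Fin d, q.1 ≠ q.2 ∧ D σ = {q.1, q.2} := by
      intro σ h
      obtain ⟨a, b, hab, hs⟩ := Finset.card_eq_two.1 ((hadjD σ).1 h)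
      exact ⟨(a, b), hab, hs⟩
    classical
    apply Finset.sum_ninvolution
      (fun σ => if h : (SR d n).Adj v (f σ) then
        Equiv.swap (hC σ h).choose.1 (hC σ h).choose.2 * σ else σ)
    · -- terms cancel in pairs
      intro σ
      by_cases h : (SR d n).Adj v (f σ)
      · rw [dif_pos h, if_pos h]
        obtain ⟨hab, hs⟩ := (hC σ h).choose_spec
        have hadj' : (SR d n).Adj v (f (Equiv.swap (hC σ h).choose.1 (hC σ h).choose.2 * σ)) := by
          rw [hadjD, key σ _ _ hab hs, Finset.card_insert_of_notMem (by simpa using hab),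
            Finset.card_singleton]
        rw [if_pos hadj', hsignswap _ _ σ hab]
        ring
      · rw [dif_neg h, if_neg h]; norm_num
    · -- nontrivial on nonzero terms
      intro σ hne
      have h : (SR d n).Adj v (f σ) := by
        by_contra h; rw [if_neg h] at hne; exact hne rfl
      rw [dif_pos h]
      intro hc
      obtain ⟨hab, _⟩ := (hC σ h).choose_spec
      have : Equiv.swap (hC σ h).choose.1 (hC σ h).choose.2 = 1 :=
        mul_right_cancel (by rw [hc, one_mul])
      exact hab (Equiv.swap_eq_one_iff.1 this)
    · intro σ; exact Finset.mem_univ _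
    · -- involutivity
      intro σ
      by_cases h : (SR d n).Adj v (f σ)
      · rw [dif_pos h]
        obtain ⟨hab, hs⟩ := (hC σ h).choose_spec
        set a := (hC σ h).choose.1
        set b := (hC σ h).choose.2
        have hDs' : D (Equiv.swap a b * σ) = {a, b} := key σ a b hab hs
        have h' : (SR d n).Adj v (f (Equiv.swap a b * σ)) := by
          rw [hadjD, hDs', Finset.card_insert_of_notMem (by simpa using hab),
            Finset.card_singleton]
        rw [dif_pos h']
        obtain ⟨hab', hs'⟩ := (hC _ h').choose_spec
        have hpair : ({(hC _ h').choose.1, (hC _ h').choose.2} : Finset (Fin d)) = {a, b} := by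
          rw [← hs', hDs']
        have hswap : Equiv.swap (hC _ h').choose.1 (hC _ h').choose.2 = Equiv.swap a b :=
          pair_cases' hab' hab hpair
        rw [hswap, ← mul_assoc, Equiv.swap_mul_self, one_mul]
      · rw [dif_neg h, dif_neg h]
end

section
/- Every permutohedron vector H_{p,s} (with s the standard offset vector) is orthogonal to every lattice-line characteristic vector X_alpha^{(i,j)} in R^{V(d,n)}. -/
open Finset

/-- The standard offset vector, whose `i`-th coordinate (`0`-indexed) is
`(2(i+1) - 1 - d)/2`. -/
noncomputable def soff (d : ℕ) : Fin d → ℝ := fun i => (2*(i : ℝ) + 1 - d)/2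

/-- Characteristic vector of the lattice line through `α` in direction
`e_i - e_j`: the vertices agreeing with `α` off coordinates `i, j`. -/
def Xline (d n : ℕ) (α : SRVert d n) (i j : Fin d) : SRVert d n → ℝ :=
  fun β => if ∀ k, k ≠ i → k ≠ j → β.1 k = α.1 k then 1 else 0

/-- every permutohedron vector `H_{p,s}` (with `s` the standard
offset vector) is orthogonal to every lattice-line vector `X_α^{(i,j)}`. -/
theorem permutohedron_orthogonal_lines (d n : ℕ)
    (p : Fin d → ℝ) (f : Equiv.Perm (Fin d) → SRVert d n)
    (hf : ∀ σ i, ((f σ).1 i : ℝ) = p i + soff d (σ⁻¹ i))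
    (α : SRVert d n) (i j : Fin d) (hij : i < j) :
    ∑ v, (∑ σ : Equiv.Perm (Fin d),
        ((Equiv.Perm.sign σ : ℤ) : ℝ) * (if v = f σ then 1 else 0))
      * Xline d n α i j v = 0 := by

  have hij' : i ≠ j := ne_of_lt hij
  have key : ∀ σ : Equiv.Perm (Fin d),
      Xline d n α i j (f (Equiv.swap i j * σ)) = Xline d n α i j (f σ) := by
    intro σ
    have hval : ∀ k, k ≠ i → k ≠ j →
        (f (Equiv.swap i j * σ)).1 k = (f σ).1 k := by
      intro k hki hkj
      have h1 := hf (Equiv.swap i j * σ) k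
      have h2 := hf σ k
      have hinv : ((Equiv.swap i j * σ)⁻¹ : Equiv.Perm (Fin d)) k = σ⁻¹ k := by
        simp [mul_inv_rev, Equiv.Perm.mul_apply,
          Equiv.swap_apply_of_ne_of_ne hki hkj]
      have : (((f (Equiv.swap i j * σ)).1 k : ℝ)) = ((f σ).1 k : ℝ) := by
        rw [h1, h2, hinv]
      exact_mod_cast this
    unfold Xline
    apply if_congr _ rfl rfl
    constructor
    · intro h k hki hkj; rw [← hval k hki hkj]; exact h k hki hkj
    · intro h k hki hkj; rw [hval k hki hkj]; exact h k hki hkj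
  have step : ∑ v, (∑ σ : Equiv.Perm (Fin d),
        ((Equiv.Perm.sign σ : ℤ) : ℝ) * (if v = f σ then 1 else 0))
      * Xline d n α i j v
      = ∑ σ : Equiv.Perm (Fin d),
        ((Equiv.Perm.sign σ : ℤ) : ℝ) * Xline d n α i j (f σ) := by
    simp only [Finset.sum_mul]
    rw [Finset.sum_comm]
    refine Finset.sum_congr rfl fun σ _ => ?_
    simp [ite_mul, Finset.sum_ite_eq, Finset.sum_ite_eq']
  rw [step]
  apply Finset.sum_involution
    (g := fun σ _ => Equiv.swap i j * σ)
  · intro σ _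
    rw [key σ]
    have : ((Equiv.Perm.sign (Equiv.swap i j * σ) : ℤ) : ℝ)
        = -((Equiv.Perm.sign σ : ℤ) : ℝ) := by
      simp [Equiv.Perm.sign_swap hij']
    rw [this]; ring
  · intro σ _ _
    intro h
    have := congrArg (· * σ⁻¹) h
    simp at this
    exact hij' this
  · intro σ _; exact Finset.mem_univ _
  · intro σ _; simp [← mul_assoc]
end

section
/- If d >= 1 and n >= binomial(d,2), then the smallest eigenvalue of the adjacency matrix of SR(d,n) equals -binomial(d,2). -/
open Finset

namespace SRaux
variable {d n : ℕ}

lemma sum_split (f : Fin d → ℕ) {i j : Fin d} (hij : i ≠ j) :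
    ∑ k, f k = f i + f j + ∑ k ∈ (univ.erase i).erase j, f k := by
  rw [← Finset.add_sum_erase _ f (mem_univ i),
      ← Finset.add_sum_erase _ f (Finset.mem_erase.mpr ⟨Ne.symm hij, mem_univ j⟩)]
  ring

lemma eq_of_agree_off (x y : SRVert d n) (i₀ : Fin d)
    (h : ∀ k, k ≠ i₀ → x.1 k = y.1 k) : x = y := by
  have hs : ∑ k, x.1 k = ∑ k, y.1 k := x.2.trans y.2.symm
  rw [← Finset.add_sum_erase _ x.1 (mem_univ i₀),
      ← Finset.add_sum_erase _ y.1 (mem_univ i₀)] at hs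
  have hrest : ∑ k ∈ univ.erase i₀, x.1 k = ∑ k ∈ univ.erase i₀, y.1 k :=
    Finset.sum_congr rfl fun k hk => h k (Finset.mem_erase.mp hk).1
  have hi : x.1 i₀ = y.1 i₀ := by omega
  refine Subtype.ext (funext fun k => ?_)
  by_cases hk : k = i₀
  · subst hk; exact hi
  · exact h k hk

lemma eq_of_card_diff_le_one {x y : SRVert d n}
    (h : (univ.filter fun k => x.1 k ≠ y.1 k).card ≤ 1) : x = y := by
  rcases Nat.eq_zero_or_pos d with h0 | h0
  · subst h0; exact Subtype.ext (funext fun k => k.elim0)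
  · have : Nonempty (Fin d) := ⟨⟨0, h0⟩⟩
    obtain ⟨a, hsub⟩ := Finset.card_le_one_iff_subset_singleton.mp h
    refine eq_of_agree_off x y a fun k hk => ?_
    by_contra hne
    have : k ∈ (univ.filter fun k => x.1 k ≠ y.1 k) := by simp [hne]
    have := hsub this
    simp at this
    exact hk this

/-- the "line" through `x` in direction `(i,j)` -/
noncomputable def line (i j : Fin d) (x : SRVert d n) : Finset (SRVert d n) :=
  univ.filter fun y => ∀ k, k ≠ i → k ≠ j → y.1 k = x.1 k

lemma self_mem_line (i j : Fin d) (x : SRVert d n) : x ∈ line i j x := by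
  simp [line]

lemma mem_line_iff {i j : Fin d} {x y : SRVert d n} :
    y ∈ line i j x ↔ ∀ k, k ≠ i → k ≠ j → y.1 k = x.1 k := by
  simp [line]

/-- membership in the erased line implies adjacency -/
lemma adj_of_mem_line {i j : Fin d} (hij : i ≠ j) {x y : SRVert d n}
    (hy : y ∈ line i j x) (hne : y ≠ x) : (SR d n).Adj x y := by
  have hsub : (univ.filter fun k => x.1 k ≠ y.1 k) ⊆ {i, j} := by
    intro k hk
    simp only [mem_filter, mem_univ, true_and] at hk
    rw [mem_insert, mem_singleton]
    by_contra hc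
    push_neg at hc
    exact hk ((mem_line_iff.mp hy k hc.1 hc.2).symm)
  have hcard2 : (univ.filter fun k => x.1 k ≠ y.1 k).card = 2 := by
    have hle : (univ.filter fun k => x.1 k ≠ y.1 k).card ≤ 2 := by
      calc _ ≤ ({i, j} : Finset (Fin d)).card := Finset.card_le_card hsub
      _ ≤ 2 := Finset.card_insert_le _ _ |>.trans (by simp)
    rcases Nat.lt_or_ge (univ.filter fun k => x.1 k ≠ y.1 k).card 2 with hlt | hge
    · exact absurd (eq_of_card_diff_le_one (by omega)).symm hne
    · omega
  exact hcard2

/-- the pairs finset -/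
def P (d : ℕ) : Finset (Fin d × Fin d) := univ.filter fun p => p.1 < p.2

lemma nbr_decomp (x : SRVert d n) :
    (SR d n).neighborFinset x = (P d).biUnion fun p => (line p.1 p.2 x).erase x := by
  ext y
  simp only [SimpleGraph.mem_neighborFinset, Finset.mem_biUnion, Finset.mem_erase]
  constructor
  · intro hadj
    obtain ⟨i, j, hij, hs⟩ := Finset.card_eq_two.mp hadj
    have hmem : ∀ k, k ∈ (univ.filter fun k => x.1 k ≠ y.1 k) ↔ (k = i ∨ k = j) := by
      intro k; rw [hs]; simp
    have hyne : y ≠ x := by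
      intro he
      have : i ∈ (univ.filter fun k => x.1 k ≠ y.1 k) := (hmem i).mpr (Or.inl rfl)
      simp [he] at this
    have hline : ∀ (a b : Fin d), (∀ k, k ∈ (univ.filter fun k => x.1 k ≠ y.1 k) ↔ (k = a ∨ k = b)) → y ∈ line a b x := by
      intro a b hab
      rw [mem_line_iff]
      intro k hka hkb
      by_contra hne
      rcases (hab k).mp (by simp [Ne.symm hne]) with h | h
      · exact hka h
      · exact hkb h
    rcases lt_trichotomy i j with hlt | heq | hgt
    · exact ⟨(i, j), by simp [P, hlt], hyne, hline i j hmem⟩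
    · exact absurd heq hij
    · exact ⟨(j, i), by simp [P, hgt], hyne, hline j i (fun k => (hmem k).trans or_comm)⟩
  · rintro ⟨p, hp, hyne, hyl⟩
    have hij : p.1 ≠ p.2 := by
      simp only [P, mem_filter] at hp
      exact ne_of_lt hp.2
    exact adj_of_mem_line hij hyl hyne


lemma disjoint_lines (x : SRVert d n) :
    (↑(P d) : Set (Fin d × Fin d)).PairwiseDisjoint
      (fun p => (line p.1 p.2 x).erase x) := by
  intro p hp q hq hpq
  simp only [Finset.coe_filter, Set.mem_setOf_eq, P, Finset.mem_coe, mem_filter] at hp hq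
  simp only [Function.onFun]
  rw [Finset.disjoint_left]
  intro y hyp hyq
  rw [Finset.mem_erase] at hyp hyq
  have hsub : ∀ a b : Fin d, y ∈ line a b x →
      (univ.filter fun k => x.1 k ≠ y.1 k) ⊆ {a, b} := by
    intro a b hl k hk
    simp only [mem_filter, mem_univ, true_and] at hk
    rw [mem_insert, mem_singleton]
    by_contra hc
    push_neg at hc
    exact hk ((mem_line_iff.mp hl k hc.1 hc.2).symm)
  set s := (univ.filter fun k => x.1 k ≠ y.1 k) with hs
  have h2 : 2 ≤ s.card := by
    by_contra hc
    have hle : s.card ≤ 1 := by omega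
    rw [hs] at hle
    exact hyp.1 ((eq_of_card_diff_le_one hle).symm)
  have hsp : s = {p.1, p.2} := Finset.eq_of_subset_of_card_le (hsub _ _ hyp.2)
    (by rw [Finset.card_insert_of_notMem (by simp [ne_of_lt hp.2]), Finset.card_singleton]; omega)
  have hsq : s = {q.1, q.2} := Finset.eq_of_subset_of_card_le (hsub _ _ hyq.2)
    (by rw [Finset.card_insert_of_notMem (by simp [ne_of_lt hq.2]), Finset.card_singleton]; omega)
  have hset : ({p.1, p.2} : Finset (Fin d)) = {q.1, q.2} := hsp ▸ hsq
  apply hpq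
  have h1 : p.1 ∈ ({q.1, q.2} : Finset (Fin d)) := by rw [← hset]; simp
  have h2' : p.2 ∈ ({q.1, q.2} : Finset (Fin d)) := by rw [← hset]; simp
  have h3 : q.1 ∈ ({p.1, p.2} : Finset (Fin d)) := by rw [hset]; simp
  simp only [mem_insert, mem_singleton] at h1 h2' h3
  have hp2 := hp.2; have hq2 := hq.2
  simp only [Fin.lt_def] at hp2 hq2
  have cv : ∀ a b : Fin d, a = b → (a:ℕ) = b := fun a b h => congrArg Fin.val h
  have h1' := h1.imp (cv _ _) (cv _ _)
  have h2'' := h2'.imp (cv _ _) (cv _ _)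
  have h3' := h3.imp (cv _ _) (cv _ _)
  have hv : (p.1:ℕ) = q.1 ∧ (p.2:ℕ) = q.2 := by omega
  exact Prod.ext (Fin.ext hv.1) (Fin.ext hv.2)

lemma gauss (m : ℕ) : ∑ i ∈ range m, i = m.choose 2 := by
  have h := Finset.sum_range_id_mul_two m
  have h2 := Nat.choose_two_right m
  omega

lemma card_P : (P d).card = d.choose 2 := by
  rw [P, Finset.card_filter]
  rw [Fintype.sum_prod_type_right]
  have hinner : ∀ j : Fin d, (∑ i : Fin d, if (i, j).1 < (i, j).2 then 1 else 0) = (j : ℕ) := by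
    intro j
    have e1 : (∑ i : Fin d, if (i, j).1 < (i, j).2 then (1:ℕ) else 0)
        = ∑ i ∈ range d, if i < (j : ℕ) then 1 else 0 := by
      rw [← Fin.sum_univ_eq_sum_range (fun i => if i < (j:ℕ) then (1:ℕ) else 0) d]
      exact Finset.sum_congr rfl fun i _ => if_congr Fin.lt_def rfl rfl
    rw [e1, ← Finset.card_filter]
    have e2 : (range d).filter (fun i => i < (j:ℕ)) = range (j:ℕ) := by
      ext m
      simp only [Finset.mem_filter, Finset.mem_range]
      have := j.isLt
      omega
    rw [e2, Finset.card_range]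
  rw [Finset.sum_congr rfl fun j _ => hinner j]
  rw [Fin.sum_univ_eq_sum_range (fun i => i) d]
  exact gauss d
/-! ### Part 2 machinery: quadratic form nonnegativity along a direction -/

noncomputable def key (i j : Fin d) (y : SRVert d n) : Fin d → ℕ :=
  Function.update (Function.update y.1 i (y.1 i + y.1 j)) j 0

lemma key_eq_iff {i j : Fin d} (hij : i ≠ j) (x y : SRVert d n) :
    key i j y = key i j x ↔ y ∈ line i j x := by
  constructor
  · intro h
    rw [mem_line_iff]
    intro k hki hkj
    have := congrFun h k
    rwa [key, key, Function.update_of_ne hkj, Function.update_of_ne hkj,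
      Function.update_of_ne hki, Function.update_of_ne hki] at this
  · intro h
    have hagree := mem_line_iff.mp h
    have h1 := sum_split y.1 hij
    have h2 := sum_split x.1 hij
    rw [y.2] at h1; rw [x.2] at h2
    have hrest : ∑ k ∈ (univ.erase i).erase j, y.1 k = ∑ k ∈ (univ.erase i).erase j, x.1 k := by
      refine Finset.sum_congr rfl fun k hk => ?_
      have hk' := Finset.mem_erase.mp hk
      have hk'' := Finset.mem_erase.mp hk'.2
      exact hagree k hk''.1 hk'.1
    have hsum2 : y.1 i + y.1 j = x.1 i + x.1 j := by omega
    funext k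
    by_cases hkj : k = j
    · subst hkj; rw [key, key, Function.update_self, Function.update_self]
    · by_cases hki : k = i
      · subst hki
        simp only [key, Function.update_of_ne hij, Function.update_self]
        exact hsum2
      · rw [key, key, Function.update_of_ne hkj, Function.update_of_ne hkj,
          Function.update_of_ne hki, Function.update_of_ne hki]
        exact hagree k hki hkj

lemma line_eq_filter {i j : Fin d} (hij : i ≠ j) (x : SRVert d n) :
    line i j x = univ.filter fun y => key i j y = key i j x := by
  ext y
  rw [Finset.mem_filter]
  simp only [mem_univ, true_and]
  exact (key_eq_iff hij x y).symm

lemma quad_nonneg {i j : Fin d} (hij : i ≠ j) (v : SRVert d n → ℝ) :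
    0 ≤ ∑ x, v x * ∑ y ∈ line i j x, v y := by
  classical
  set g := key i j with hg
  set F : (Fin d → ℕ) → ℝ := fun k => ∑ y ∈ univ.filter fun y => g y = k, v y with hF
  have hline : ∀ x : SRVert d n, (∑ y ∈ line i j x, v y) = F (g x) := fun x => by
    rw [line_eq_filter hij x]
  have hfib : ∀ k ∈ univ.image g, ∑ x ∈ univ.filter (fun x => g x = k), (v x * F (g x)) = F k * F k := by
    intro k _
    have hc : ∀ x ∈ univ.filter (fun x => g x = k), v x * F (g x) = v x * F k := by
      intro x hx
      rw [(Finset.mem_filter.mp hx).2]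
    rw [Finset.sum_congr rfl hc, ← Finset.sum_mul]
  have hmain : ∑ x, v x * F (g x) = ∑ k ∈ univ.image g, F k * F k := by
    rw [← Finset.sum_fiberwise_of_maps_to
      (fun x _ => Finset.mem_image_of_mem g (mem_univ x)) (fun x => v x * F (g x))]
    exact Finset.sum_congr rfl hfib
  calc (0:ℝ) ≤ ∑ k ∈ univ.image g, F k * F k :=
        Finset.sum_nonneg fun k _ => mul_self_nonneg _
    _ = ∑ x, v x * F (g x) := hmain.symm
    _ = ∑ x, v x * ∑ y ∈ line i j x, v y := by
        exact Finset.sum_congr rfl fun x _ => by rw [hline x]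

lemma mulVec_eq_sum_lines (v : SRVert d n → ℝ) (x : SRVert d n) :
    ((SR d n).adjMatrix ℝ).mulVec v x
      = ∑ p ∈ P d, ((∑ y ∈ line p.1 p.2 x, v y) - v x) := by
  rw [SimpleGraph.adjMatrix_mulVec_apply, nbr_decomp x,
    Finset.sum_biUnion (disjoint_lines x)]
  refine Finset.sum_congr rfl fun p _ => ?_
  rw [Finset.sum_erase_eq_sub (self_mem_line p.1 p.2 x)]

lemma P_ne (p : Fin d × Fin d) (hp : p ∈ P d) : p.1 ≠ p.2 := by
  simp only [P, mem_filter] at hp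
  exact ne_of_lt hp.2

lemma lower_bound (μ : ℝ) (v : SRVert d n → ℝ) (hv : v ≠ 0)
    (hev : ((SR d n).adjMatrix ℝ).mulVec v = μ • v) :
    -(d.choose 2 : ℝ) ≤ μ := by
  classical
  set N : ℝ := ∑ x, v x * v x with hN
  have hNpos : 0 < N := by
    obtain ⟨x₀, hx₀⟩ := Function.ne_iff.mp hv
    have h1 : 0 < v x₀ * v x₀ := by
      have := mul_self_nonneg (v x₀)
      rcases this.lt_or_eq with h | h
      · exact h
      · exact absurd (mul_self_eq_zero.mp h.symm) hx₀
    have h2 := Finset.single_le_sum (f := fun x => v x * v x)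
      (fun x _ => mul_self_nonneg (v x)) (mem_univ x₀)
    exact lt_of_lt_of_le h1 h2
  have hA : ∑ x, v x * ((SR d n).adjMatrix ℝ).mulVec v x = μ * N := by
    rw [hN, Finset.mul_sum]
    refine Finset.sum_congr rfl fun x _ => ?_
    rw [hev]
    simp [Pi.smul_apply, smul_eq_mul]
    ring
  have hB : ∑ x, v x * ((SR d n).adjMatrix ℝ).mulVec v x
      = ∑ p ∈ P d, ((∑ x, v x * ∑ y ∈ line p.1 p.2 x, v y) - N) := by
    rw [Finset.sum_congr rfl fun x _ => by rw [mulVec_eq_sum_lines v x]]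
    rw [Finset.sum_congr rfl fun x (_ : x ∈ univ) => Finset.mul_sum (P d) _ (v x)]
    rw [Finset.sum_comm]
    refine Finset.sum_congr rfl fun p _ => ?_
    rw [hN, ← Finset.sum_sub_distrib]
    exact Finset.sum_congr rfl fun x _ => by ring
  have hge : μ * N ≥ ∑ p ∈ P d, (0 - N) := by
    rw [← hA, hB]
    refine Finset.sum_le_sum fun p hp => ?_
    have := quad_nonneg (P_ne p hp) v
    linarith
  rw [Finset.sum_const, card_P] at hge
  have : -(d.choose 2 : ℝ) * N ≤ μ * N := by
    simpa [nsmul_eq_mul] using hge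
  exact le_of_mul_le_mul_right (by linarith [this]) hNpos

/-! ### Part 1: the eigenvector -/

def cfun (d n : ℕ) : Fin d → ℕ := fun k => if (k : ℕ) = d - 1 then n - (d-1).choose 2 else (k : ℕ)

lemma choose_split {d : ℕ} (hd : 1 ≤ d) : d.choose 2 = (d-1).choose 2 + (d-1) := by
  obtain ⟨m, rfl⟩ : ∃ m, d = m + 1 := ⟨d - 1, by omega⟩
  simp only [Nat.add_sub_cancel]
  have h := Nat.choose_succ_succ m 1
  norm_num [Nat.choose_one_right] at h
  omega

lemma cfun_sum (hd : 1 ≤ d) (hn : d.choose 2 ≤ n) : ∑ k, cfun d n k = n := by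
  obtain ⟨m, rfl⟩ : ∃ m, d = m + 1 := ⟨d - 1, by omega⟩
  have hm : m.choose 2 + m ≤ n := by
    have h := choose_split (d := m + 1) (by omega)
    simp only [Nat.add_sub_cancel] at h
    omega
  have e1 : ∑ k : Fin (m+1), cfun (m+1) n k
      = ∑ i ∈ range (m+1), (if i = m then n - m.choose 2 else i) := by
    rw [← Fin.sum_univ_eq_sum_range (fun i => if i = m then n - m.choose 2 else i) (m+1)]
    refine Finset.sum_congr rfl fun k _ => ?_
    simp [cfun]
  rw [e1, Finset.sum_range_succ]
  have e2 : ∑ i ∈ range m, (if i = m then n - m.choose 2 else i) = ∑ i ∈ range m, i := by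
    refine Finset.sum_congr rfl fun i hi => ?_
    rw [if_neg (by have := Finset.mem_range.mp hi; omega)]
  rw [e2, gauss m, if_pos rfl]
  omega

lemma cfun_inj (hd : 1 ≤ d) (hn : d.choose 2 ≤ n) : Function.Injective (cfun d n) := by
  intro a b hab
  have hB : d - 1 ≤ n - (d-1).choose 2 := by
    have := choose_split hd
    omega
  have ha := a.isLt; have hb := b.isLt
  unfold cfun at hab
  apply Fin.ext
  by_cases h1 : (a:ℕ) = d - 1 <;> by_cases h2 : (b:ℕ) = d - 1 <;>
    simp only [h1, h2, if_pos, if_neg, if_true, if_false] at hab ⊢ <;> omega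

noncomputable def pvert (hd : 1 ≤ d) (hn : d.choose 2 ≤ n) (σ : Equiv.Perm (Fin d)) :
    SRVert d n :=
  ⟨fun k => cfun d n (σ k), by rw [Equiv.sum_comp σ (cfun d n)]; exact cfun_sum hd hn⟩

noncomputable def evec (hd : 1 ≤ d) (hn : d.choose 2 ≤ n) : SRVert d n → ℝ :=
  fun x => ∑ σ : Equiv.Perm (Fin d),
    ((Equiv.Perm.sign σ : ℤ) : ℝ) * (if x = pvert hd hn σ then 1 else 0)

lemma evec_ne_zero (hd : 1 ≤ d) (hn : d.choose 2 ≤ n) : evec hd hn ≠ 0 := by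
  classical
  intro h
  have h0 := congrFun h (pvert hd hn 1)
  rw [evec] at h0
  have hcond : ∀ σ : Equiv.Perm (Fin d), pvert hd hn 1 = pvert hd hn σ ↔ σ = 1 := by
    intro σ
    constructor
    · intro he
      refine Equiv.ext fun k => ?_
      have hk := congrFun (congrArg Subtype.val he) k
      simp only [pvert, Equiv.Perm.one_apply] at hk
      show σ k = k
      exact (cfun_inj hd hn hk).symm
    · rintro rfl; rfl
  have : ∑ σ : Equiv.Perm (Fin d),
      ((Equiv.Perm.sign σ : ℤ) : ℝ) * (if pvert hd hn 1 = pvert hd hn σ then 1 else 0)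
      = ∑ σ : Equiv.Perm (Fin d), (if σ = 1 then (1:ℝ) else 0) := by
    refine Finset.sum_congr rfl fun σ _ => ?_
    rw [if_congr (hcond σ) rfl rfl]
    by_cases hσ : σ = 1
    · subst hσ; simp
    · simp [hσ]
  rw [this, Finset.sum_ite_eq' univ (1 : Equiv.Perm (Fin d)) (fun _ => (1:ℝ))] at h0
  simp at h0

lemma evec_line_sum (hd : 1 ≤ d) (hn : d.choose 2 ≤ n) {i j : Fin d} (hij : i ≠ j)
    (x : SRVert d n) : ∑ y ∈ line i j x, evec hd hn y = 0 := by
  classical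
  rw [show ∑ y ∈ line i j x, evec hd hn y
      = ∑ σ : Equiv.Perm (Fin d), ∑ y ∈ line i j x,
          ((Equiv.Perm.sign σ : ℤ) : ℝ) * (if y = pvert hd hn σ then 1 else 0) from
    Finset.sum_comm]
  have hinner : ∀ σ : Equiv.Perm (Fin d),
      (∑ y ∈ line i j x, ((Equiv.Perm.sign σ : ℤ) : ℝ) * (if y = pvert hd hn σ then 1 else 0))
      = ((Equiv.Perm.sign σ : ℤ) : ℝ) * (if pvert hd hn σ ∈ line i j x then 1 else 0) := by
    intro σ
    rw [← Finset.mul_sum, Finset.sum_ite_eq' (line i j x) (pvert hd hn σ) (fun _ => (1:ℝ))]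
  rw [Finset.sum_congr rfl fun σ _ => hinner σ]
  refine Finset.sum_involution (fun σ _ => σ * Equiv.swap i j) ?_ ?_ (fun _ _ => mem_univ _) ?_
  · intro σ _
    have hsign : ((Equiv.Perm.sign (σ * Equiv.swap i j) : ℤ) : ℝ)
        = -((Equiv.Perm.sign σ : ℤ) : ℝ) := by
      rw [Equiv.Perm.sign_mul, Equiv.Perm.sign_swap hij]
      push_cast
      ring
    have hmem : (pvert hd hn (σ * Equiv.swap i j) ∈ line i j x)
        ↔ (pvert hd hn σ ∈ line i j x) := by
      rw [mem_line_iff, mem_line_iff]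
      constructor <;> intro h k hki hkj <;> have := h k hki hkj <;>
        simpa [pvert, Equiv.Perm.mul_apply, Equiv.swap_apply_of_ne_of_ne hki hkj] using this
    rw [hsign, if_congr hmem rfl rfl]
    ring
  · intro σ _ hfne
    intro he
    have he' : σ * Equiv.swap i j = σ := he
    have hone : Equiv.swap i j = 1 :=
      mul_left_cancel (a := σ) (by rw [he', mul_one])
    have h2 : Equiv.swap i j i = (1 : Equiv.Perm (Fin d)) i := by rw [hone]
    rw [Equiv.swap_apply_left] at h2
    exact hij h2.symm
  · intro σ _
    show σ * Equiv.swap i j * Equiv.swap i j = σ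
    rw [mul_assoc, Equiv.swap_mul_self, mul_one]

lemma evec_mulVec (hd : 1 ≤ d) (hn : d.choose 2 ≤ n) :
    ((SR d n).adjMatrix ℝ).mulVec (evec hd hn) = (-(d.choose 2 : ℝ)) • (evec hd hn) := by
  funext x
  rw [mulVec_eq_sum_lines (evec hd hn) x]
  have : ∀ p ∈ P d, ((∑ y ∈ line p.1 p.2 x, evec hd hn y) - evec hd hn x)
      = - evec hd hn x := by
    intro p hp
    rw [evec_line_sum hd hn (P_ne p hp) x]
    ring
  rw [Finset.sum_congr rfl this, Finset.sum_const, card_P]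
  simp [nsmul_eq_mul]

end SRaux


/-- for `n ≥ binom(d,2)`, the smallest eigenvalue of the adjacency
matrix of `SR(d,n)` equals `-binom(d,2)`: it is attained by some nonzero vector,
and every eigenvalue is at least `-binom(d,2)`. -/
theorem smallest_eigenvalue (d n : ℕ) (hd : 1 ≤ d) (hn : d.choose 2 ≤ n) :
    (∃ v : SRVert d n → ℝ, v ≠ 0 ∧
      ((SR d n).adjMatrix ℝ).mulVec v = (-(d.choose 2 : ℝ)) • v) ∧
    (∀ (μ : ℝ) (v : SRVert d n → ℝ), v ≠ 0 →
      ((SR d n).adjMatrix ℝ).mulVec v = μ • v → -(d.choose 2 : ℝ) ≤ μ) := by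
  exact ⟨⟨SRaux.evec hd hn, SRaux.evec_ne_zero hd hn, SRaux.evec_mulVec hd hn⟩,
    fun μ v hv hev => SRaux.lower_bound μ v hv hev⟩
end
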